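/- Assume P is non-degenerate (μ ≠ ν implies μP^n ≠ νP^n for all n). Let μ ≠ μ′ be two translation-invariant probability measures with relative entropy density s(μ|μ′) = 0. Then for every n ∈ N, μ′P^n does not satisfy GCB(C) for any C ≥ 0. -/

import Mathlib

open MeasureTheory Filter
open scoped ENNReal

/-- Spatial configurations: spins (encoded as `Bool`, `true` = +1) indexed by `ι`. -/
abbrev Config (ι : Type*) := ι → Bool

/-- The lattice `ℤ^d`. -/
abbrev Site (d : ℕ) := Fin d → ℤ

/-- Spin value `±1` of a Boolean. -/
noncomputable def spin (b : Bool) : ℝ := if b then 1 else -1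

/-- Flip the spin of `σ` at site `x`. -/
def flipAt {ι : Type*} [DecidableEq ι] (σ : Config ι) (x : ι) : Config ι :=
  Function.update σ x (!σ x)

/-- Oscillation `δ_x f = sup_σ (f(σ^{(x)}) - f(σ))`. -/
noncomputable def osc {ι : Type*} [DecidableEq ι] (f : Config ι → ℝ) (x : ι) : ℝ :=
  ⨆ σ : Config ι, (f (flipAt σ x) - f σ)

/-- `‖δ f‖₂²  = ∑_x (δ_x f)²`. -/
noncomputable def oscNormSq {ι : Type*} [DecidableEq ι] (f : Config ι → ℝ) : ℝ :=
  ∑' x : ι, osc f x ^ 2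

/-- `‖δ f‖₁ = ∑_x δ_x f`. -/
noncomputable def oscNorm1 {ι : Type*} [DecidableEq ι] (f : Config ι → ℝ) : ℝ :=
  ∑' x : ι, osc f x

/-- `f` depends only on the coordinates in `Λ` (i.e. `f` is `F_Λ`-measurable). -/
def LocalOn {ι : Type*} (Λ : Finset ι) (f : Config ι → ℝ) : Prop :=
  ∀ σ τ : Config ι, (∀ x ∈ Λ, σ x = τ x) → f σ = f τ

/-- `f` is a local function. -/
def IsLocal {ι : Type*} (f : Config ι → ℝ) : Prop := ∃ Λ : Finset ι, LocalOn Λ f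

/-- Gaussian concentration bound with constant `C`:
`log ∫ e^{f - ∫ f dμ} dμ ≤ (C/2) ‖δ f‖₂²` for every local function `f`. -/
def GCB {ι : Type*} [DecidableEq ι] (μ : Measure (Config ι)) (C : ℝ) : Prop :=
  ∀ f : Config ι → ℝ, IsLocal f →
    Real.log (∫ σ, Real.exp (f σ - ∫ τ, f τ ∂μ) ∂μ) ≤ C / 2 * oscNormSq f

/-- The cylinder set of configurations agreeing with `b` on `Λ`. -/
def cyl {ι : Type*} (Λ : Finset ι) (b : ι → Bool) : Set (Config ι) :=
  {σ | ∀ x ∈ Λ, σ x = b x}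

/-- `h_x(η) = ∑_{A ⋐ ℤ^d} r_A η_{A+x}`. -/
noncomputable def hfun {d : ℕ} (r : Finset (Site d) → ℝ) (x : Site d)
    (η : Config (Site d)) : ℝ :=
  ∑' A : Finset (Site d), r A * ∏ y ∈ A, spin (η (y + x))

/-- `p_x(η) = ½ (1 + η_x h_x(η))`, the probability that the new spin at `x` is `+1`. -/
noncomputable def pPlus {d : ℕ} (r : Finset (Site d) → ℝ) (x : Site d)
    (η : Config (Site d)) : ℝ :=
  (1 + spin (η x) * hfun r x η) / 2

/-- A (translation-invariant) probabilistic cellular automaton on `{-1,+1}^{ℤ^d}`: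
given the configuration `η`, the next configuration is distributed as the product
measure with marginals `p_x(η)` at site `x`. -/
structure PCA (d : ℕ) where
  r : Finset (Site d) → ℝ
  summable_r : Summable fun A => |r A|
  hbound : ∀ (x : Site d) (η : Config (Site d)), |hfun r x η| ≤ 1
  ker : Config (Site d) → Measure (Config (Site d))
  ker_meas : Measurable ker
  ker_prob : ∀ η, IsProbabilityMeasure (ker η)
  ker_marginal : ∀ (η : Config (Site d)) (Λ : Finset (Site d)) (b : Site d → Bool),
    ker η (cyl Λ b) =
      ∏ x ∈ Λ, ENNReal.ofReal (if b x then pPlus r x η else 1 - pPlus r x η)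

/-- The transition operator `P` acting on functions: `Pf(η) = ∫ f(σ) p(dσ|η)`. -/
noncomputable def Pop {d : ℕ} (P : PCA d) (f : Config (Site d) → ℝ)
    (η : Config (Site d)) : ℝ :=
  ∫ σ, f σ ∂(P.ker η)

/-- The transition operator acting on measures: `μP`. -/
noncomputable def Pmeas {d : ℕ} (P : PCA d) (μ : Measure (Config (Site d))) :
    Measure (Config (Site d)) :=
  μ.bind P.ker

/-- `ψ(x) = ∑_{A ∋ x} |r_A|`. -/
noncomputable def psi {d : ℕ} (P : PCA d) (x : Site d) : ℝ :=
  ∑' A : Finset (Site d), if x ∈ A then |P.r A| else 0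

/-- `‖ψ‖₁ = ∑_{A ⋐ ℤ^d} |A| |r_A|`. -/
noncomputable def psiNorm1 {d : ℕ} (P : PCA d) : ℝ :=
  ∑' A : Finset (Site d), (A.card : ℝ) * |P.r A|

/-- The contraction coefficient `κ = ‖ψ‖₁² = (∑_A |A||r_A|)²`. -/
noncomputable def kappa {d : ℕ} (P : PCA d) : ℝ := psiNorm1 P ^ 2

/-- The shift (translation) of a configuration by `a ∈ ℤ^d`. -/
def shift {d : ℕ} (a : Site d) (σ : Config (Site d)) : Config (Site d) :=
  fun x => σ (x + a)

/-- Translation invariance of a measure on `{-1,+1}^{ℤ^d}`. -/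
def TransInv {d : ℕ} (μ : Measure (Config (Site d))) : Prop :=
  ∀ a : Site d, μ.map (shift a) = μ

/-- The cube `C_n = [-n,n]^d ∩ ℤ^d` as a finite set of sites. -/
noncomputable def cube (d n : ℕ) : Finset (Site d) :=
  Fintype.piFinset fun _ : Fin d => Finset.Icc (-(n : ℤ)) (n : ℤ)

/-- The relative entropy `S_Λ(ν|μ)` of the `Λ`-marginals (in `[0,∞]`,
`∞` unless `ν_Λ ≪ μ_Λ`). -/
noncomputable def relEntVol {ι : Type*} [DecidableEq ι]
    (ν μ : Measure (Config ι)) (Λ : Finset ι) : ℝ≥0∞ := by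
  classical
  exact
    if ∀ b : ι → Bool, μ (cyl Λ b) = 0 → ν (cyl Λ b) = 0 then
      ENNReal.ofReal (∑ b : Λ → Bool,
        (ν (cyl Λ fun x => if h : x ∈ Λ then b ⟨x, h⟩ else false)).toReal *
          Real.log ((ν (cyl Λ fun x => if h : x ∈ Λ then b ⟨x, h⟩ else false)).toReal /
            (μ (cyl Λ fun x => if h : x ∈ Λ then b ⟨x, h⟩ else false)).toReal))
    else ⊤

/-- The lower relative entropy density `s_*(ν|μ) = liminf_n S_{C_n}(ν|μ)/|C_n|`. -/
noncomputable def sStar {d : ℕ} (ν μ : Measure (Config (Site d))) : ℝ≥0∞ :=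
  Filter.liminf (fun n : ℕ => relEntVol ν μ (cube d n) / ((cube d n).card : ℝ≥0∞))
    Filter.atTop

set_option linter.unusedSectionVars false
section Layer1
open MeasureTheory

variable {ι : Type*} [DecidableEq ι]

/-- Extension of a pattern on `Λ` by `false`. -/
def extb (Λ : Finset ι) (b : Λ → Bool) : ι → Bool :=
  fun x => if h : x ∈ Λ then b ⟨x, h⟩ else false

lemma measurableSet_cyl (Λ : Finset ι) (b : ι → Bool) : MeasurableSet (cyl Λ b) := by
  have h1 : cyl Λ b = ⋂ x ∈ (Λ : Set ι), (fun σ : Config ι => σ x) ⁻¹' {b x} := by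
    ext σ; simp [cyl]
  rw [h1]
  exact MeasurableSet.biInter (Λ.countable_toSet) fun x _ =>
    (measurable_pi_apply x) (measurableSet_singleton (b x))

lemma mem_cyl_extb {Λ : Finset ι} {b : Λ → Bool} {σ : Config ι} :
    σ ∈ cyl Λ (extb Λ b) ↔ ∀ x : Λ, σ x = b x := by
  constructor
  · intro h x
    have := h x x.2
    simpa [extb, x.2] using this
  · intro h x hx
    simpa [extb, hx] using h ⟨x, hx⟩

lemma mem_cyl_restrict {Λ : Finset ι} (σ : Config ι) :
    σ ∈ cyl Λ (extb Λ (fun x : Λ => σ x)) :=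
  mem_cyl_extb.2 fun _ => rfl

lemma cyl_extb_disjoint {Λ : Finset ι} {b b' : Λ → Bool} (h : b ≠ b') :
    Disjoint (cyl Λ (extb Λ b)) (cyl Λ (extb Λ b')) := by
  rw [Set.disjoint_left]
  intro σ h1 h2
  exact h (by funext x; rw [← mem_cyl_extb.1 h1 x, mem_cyl_extb.1 h2 x])

lemma iUnion_cyl_extb (Λ : Finset ι) :
    (⋃ b : Λ → Bool, cyl Λ (extb Λ b)) = Set.univ := by
  ext σ
  simp only [Set.mem_iUnion, Set.mem_univ, iff_true]
  exact ⟨fun x : Λ => σ x, mem_cyl_restrict σ⟩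

lemma sum_measure_cyl (μ : Measure (Config ι)) [IsProbabilityMeasure μ] (Λ : Finset ι) :
    ∑ b : Λ → Bool, μ (cyl Λ (extb Λ b)) = 1 := by
  rw [← tsum_fintype (L := SummationFilter.unconditional _), ← measure_iUnion (fun b b' h => cyl_extb_disjoint h)
    (fun b => measurableSet_cyl _ _), iUnion_cyl_extb]
  simp

lemma LocalOn.mono {Λ Λ' : Finset ι} {f : Config ι → ℝ} (h : LocalOn Λ f) (hsub : Λ ⊆ Λ') :
    LocalOn Λ' f :=
  fun σ τ hagree => h σ τ fun x hx => hagree x (hsub hx)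

lemma LocalOn.comp {Λ : Finset ι} {f : Config ι → ℝ} (h : LocalOn Λ f) (g : ℝ → ℝ) :
    LocalOn Λ (fun σ => g (f σ)) :=
  fun σ τ hagree => congrArg g (h σ τ hagree)

lemma LocalOn.apply_extb {Λ : Finset ι} {f : Config ι → ℝ} (h : LocalOn Λ f) (σ : Config ι) :
    f σ = f (extb Λ (fun x : Λ => σ x)) :=
  h _ _ fun x hx => ((mem_cyl_restrict σ) x hx).symm ▸ rfl

lemma LocalOn.measurable {Λ : Finset ι} {f : Config ι → ℝ} (h : LocalOn Λ f) :
    Measurable f := by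
  have : f = (fun p : Λ → Bool => f (extb Λ p)) ∘ (fun σ (x : Λ) => σ x) := by
    funext σ
    exact h.apply_extb σ
  rw [this]
  exact (measurable_of_countable _).comp
    (measurable_pi_lambda _ fun x => measurable_pi_apply (x : ι))

/-- A local function as a finite sum of constants times indicators. -/
lemma LocalOn.eq_sum_indicator {Λ : Finset ι} {f : Config ι → ℝ} (h : LocalOn Λ f) :
    f = fun σ => ∑ b : Λ → Bool,
      Set.indicator (cyl Λ (extb Λ b)) (fun _ => f (extb Λ b)) σ := by
  funext σ
  rw [Finset.sum_eq_single (fun x : Λ => σ x)]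
  · rw [Set.indicator_of_mem (mem_cyl_restrict σ)]
    exact h.apply_extb σ
  · intro b _ hb
    exact Set.indicator_of_notMem
      (fun hm => hb (by funext x; exact (mem_cyl_extb.1 hm x).symm ▸ rfl)) _
  · intro hmem
    exact absurd (Finset.mem_univ _) hmem

lemma integral_local (μ : Measure (Config ι)) [IsProbabilityMeasure μ]
    {Λ : Finset ι} {f : Config ι → ℝ} (h : LocalOn Λ f) :
    ∫ σ, f σ ∂μ = ∑ b : Λ → Bool, f (extb Λ b) * (μ (cyl Λ (extb Λ b))).toReal := by
  conv_lhs => rw [h.eq_sum_indicator]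
  rw [integral_finset_sum]
  · refine Finset.sum_congr rfl fun b _ => ?_
    rw [integral_indicator_const _ (measurableSet_cyl _ _)]
    simp [mul_comm, Measure.real]
  · exact fun b _ => (integrable_const _).indicator (measurableSet_cyl _ _)

lemma integrable_of_bounded_meas {μ : Measure (Config ι)} [IsProbabilityMeasure μ]
    {f : Config ι → ℝ} (hm : Measurable f) {B : ℝ} (hb : ∀ σ, |f σ| ≤ B) :
    Integrable f μ :=
  (integrable_const B).mono' hm.aestronglyMeasurable
    (Filter.Eventually.of_forall fun σ => by simpa using hb σ)

/-- Two probability measures agreeing on all cylinders coincide. -/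
lemma measure_ext_cyl {μ ν : Measure (Config ι)} [IsProbabilityMeasure μ]
    [IsProbabilityMeasure ν]
    (h : ∀ (Λ : Finset ι) (b : Λ → Bool), μ (cyl Λ (extb Λ b)) = ν (cyl Λ (extb Λ b))) :
    μ = ν := by
  refine ext_of_generate_finite (MeasureTheory.measurableCylinders fun _ : ι => Bool)
    generateFrom_measurableCylinders.symm isPiSystem_measurableCylinders ?_ (by simp)
  intro s hs
  obtain ⟨Λ, S, hS, rfl⟩ := (mem_measurableCylinders s).mp hs
  classical
  have huni : MeasureTheory.cylinder Λ S =
      ⋃ b ∈ (Set.toFinite S).toFinset, cyl Λ (extb Λ b) := by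
    ext σ
    simp only [MeasureTheory.mem_cylinder, Set.mem_iUnion, Set.Finite.mem_toFinset]
    constructor
    · intro hmem
      exact ⟨fun x : Λ => σ x, hmem, mem_cyl_restrict σ⟩
    · rintro ⟨b, hbS, hb⟩
      have hres : Λ.restrict σ = b := funext fun x => mem_cyl_extb.1 hb x
      rwa [hres]
  rw [huni, measure_biUnion_finset ?_ (fun b _ => measurableSet_cyl _ _),
    measure_biUnion_finset ?_ (fun b _ => measurableSet_cyl _ _)]
  · exact Finset.sum_congr rfl fun b _ => h Λ b
  · intro b _ b' _ hbb'
    exact cyl_extb_disjoint hbb'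
  · intro b _ b' _ hbb'
    exact cyl_extb_disjoint hbb'

end Layer1
section Layer2
open MeasureTheory

/-- Finite-alphabet Gibbs / Donsker–Varadhan variational inequality. -/
lemma gibbs_finset {β : Type*} [Fintype β] (p q φ : β → ℝ)
    (hp : ∀ b, 0 ≤ p b) (hq : ∀ b, 0 ≤ q b)
    (hsp : ∑ b, p b = 1) (hsq : ∑ b, q b = 1)
    (hac : ∀ b, q b = 0 → p b = 0) :
    ∑ b, p b * φ b - Real.log (∑ b, q b * Real.exp (φ b)) ≤
      ∑ b, p b * Real.log (p b / q b) := by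
  set Z := ∑ b, q b * Real.exp (φ b) with hZ
  have hZpos : 0 < Z := by
    obtain ⟨b0, hb0⟩ : ∃ b, q b ≠ 0 := by
      by_contra hc
      push_neg at hc
      simp [hc] at hsq
    have h1 : q b0 * Real.exp (φ b0) ≤ Z :=
      Finset.single_le_sum (fun b _ => mul_nonneg (hq b) (Real.exp_pos _).le)
        (Finset.mem_univ b0)
    have h2 : 0 < q b0 * Real.exp (φ b0) :=
      mul_pos (lt_of_le_of_ne (hq b0) (Ne.symm hb0)) (Real.exp_pos _)
    linarith
  have key : ∀ b, p b - q b * Real.exp (φ b) / Z ≤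
      p b * (Real.log (p b / q b) - φ b + Real.log Z) := by
    intro b
    rcases eq_or_lt_of_le (hp b) with h0 | hpb
    · rw [← h0]
      have : 0 ≤ q b * Real.exp (φ b) / Z :=
        div_nonneg (mul_nonneg (hq b) (Real.exp_pos _).le) hZpos.le
      simpa using this
    · have hqb : 0 < q b := by
        rcases eq_or_lt_of_le (hq b) with h0 | h
        · exact absurd (hac b h0.symm).symm (ne_of_lt hpb)
        · exact h
      set t := q b * Real.exp (φ b) / (p b * Z) with ht
      have htpos : 0 < t := by positivity
      have hlog : Real.log t ≤ t - 1 := Real.log_le_sub_one_of_pos htpos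
      have hlogt : Real.log t = Real.log (q b) + φ b - Real.log (p b) - Real.log Z := by
        rw [ht, Real.log_div (by positivity) (by positivity), Real.log_mul (ne_of_gt hqb)
          (Real.exp_ne_zero _), Real.log_mul (ne_of_gt hpb) (ne_of_gt hZpos), Real.log_exp]
        ring
      have hexpand : Real.log (p b / q b) - φ b + Real.log Z = -Real.log t := by
        rw [hlogt, Real.log_div (ne_of_gt hpb) (ne_of_gt hqb)]
        ring
      rw [hexpand]
      have h1 : p b * (1 - t) ≤ p b * (-Real.log t) := by
        apply mul_le_mul_of_nonneg_left _ hpb.le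
        linarith
      calc p b - q b * Real.exp (φ b) / Z = p b * (1 - t) := by
            rw [ht]; field_simp
          _ ≤ p b * (-Real.log t) := h1
  have hsum := Finset.sum_le_sum fun b (_ : b ∈ Finset.univ) => key b
  rw [Finset.sum_sub_distrib] at hsum
  have e1 : ∑ b, q b * Real.exp (φ b) / Z = 1 := by
    rw [← Finset.sum_div, ← hZ, div_self (ne_of_gt hZpos)]
  rw [hsp, e1] at hsum
  have e2 : ∑ b, p b * (Real.log (p b / q b) - φ b + Real.log Z)
      = ∑ b, p b * Real.log (p b / q b) - ∑ b, p b * φ b + Real.log Z := by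
    rw [Finset.sum_congr rfl (fun b _ => by ring :
      ∀ b ∈ Finset.univ, p b * (Real.log (p b / q b) - φ b + Real.log Z)
        = p b * Real.log (p b / q b) - p b * φ b + p b * Real.log Z)]
    rw [Finset.sum_add_distrib, Finset.sum_sub_distrib, ← Finset.sum_mul, hsp, one_mul]
  rw [e2] at hsum
  linarith

variable {ι : Type*} [DecidableEq ι]

/-- The variational lower bound for the finite-volume relative entropy. -/
lemma relEntVol_ge_variational (μ μ' : Measure (Config ι)) [IsProbabilityMeasure μ]
    [IsProbabilityMeasure μ'] (Λ : Finset ι) {f : Config ι → ℝ} (hf : LocalOn Λ f) :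
    ENNReal.ofReal (∫ σ, f σ ∂μ - Real.log (∫ σ, Real.exp (f σ) ∂μ')) ≤
      relEntVol μ μ' Λ := by
  classical
  rw [relEntVol]
  split_ifs with hAC
  · set p : (Λ → Bool) → ℝ := fun b => (μ (cyl Λ (extb Λ b))).toReal with hp
    set q : (Λ → Bool) → ℝ := fun b => (μ' (cyl Λ (extb Λ b))).toReal with hq
    have hext : ∀ b : Λ → Bool,
        (cyl Λ fun x => if h : x ∈ Λ then b ⟨x, h⟩ else false) = cyl Λ (extb Λ b) := by
      intro b; rfl
    have hsum_eq : (∑ b : Λ → Bool,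
        (μ (cyl Λ fun x => if h : x ∈ Λ then b ⟨x, h⟩ else false)).toReal *
          Real.log ((μ (cyl Λ fun x => if h : x ∈ Λ then b ⟨x, h⟩ else false)).toReal /
            (μ' (cyl Λ fun x => if h : x ∈ Λ then b ⟨x, h⟩ else false)).toReal))
        = ∑ b : Λ → Bool, p b * Real.log (p b / q b) := by
      refine Finset.sum_congr rfl fun b _ => ?_
      rw [hext b]
    rw [hsum_eq]
    apply ENNReal.ofReal_le_ofReal
    rw [integral_local μ hf, integral_local μ' (hf.comp Real.exp)]
    have hsp : ∑ b, p b = 1 := by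
      rw [hp, ← ENNReal.toReal_sum (fun b _ => measure_ne_top μ _), sum_measure_cyl]
      simp
    have hsq : ∑ b, q b = 1 := by
      rw [hq, ← ENNReal.toReal_sum (fun b _ => measure_ne_top μ' _), sum_measure_cyl]
      simp
    have hac : ∀ b, q b = 0 → p b = 0 := by
      intro b hb
      have h0 : μ' (cyl Λ (extb Λ b)) = 0 := by
        rcases (ENNReal.toReal_eq_zero_iff _).mp hb with h | h
        · exact h
        · exact absurd h (measure_ne_top μ' _)
      have := hAC (extb Λ b) h0
      simp [hp, this]
    have := gibbs_finset p q (fun b => f (extb Λ b)) (fun b => ENNReal.toReal_nonneg)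
      (fun b => ENNReal.toReal_nonneg) hsp hsq hac
    calc ∑ b : Λ → Bool, f (extb Λ b) * p b -
          Real.log (∑ b : Λ → Bool, Real.exp (f (extb Λ b)) * q b)
        = ∑ b : Λ → Bool, p b * f (extb Λ b) -
          Real.log (∑ b : Λ → Bool, q b * Real.exp (f (extb Λ b))) := by
          simp_rw [mul_comm]
      _ ≤ ∑ b, p b * Real.log (p b / q b) := this
  · exact le_top

end Layer2
section Layer3
open MeasureTheory

variable {d : ℕ}

lemma abs_spin (b : Bool) : |spin b| = 1 := by
  cases b <;> simp [spin]

lemma pPlus_nonneg (P : PCA d) (x : Site d) (η : Config (Site d)) : 0 ≤ pPlus P.r x η := by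
  have h := P.hbound x η
  have : |spin (η x) * hfun P.r x η| ≤ 1 := by
    rw [abs_mul, abs_spin, one_mul]; exact h
  rw [abs_le] at this
  rw [pPlus]; linarith [this.1]

lemma pPlus_le_one (P : PCA d) (x : Site d) (η : Config (Site d)) : pPlus P.r x η ≤ 1 := by
  have h := P.hbound x η
  have : |spin (η x) * hfun P.r x η| ≤ 1 := by
    rw [abs_mul, abs_spin, one_mul]; exact h
  rw [abs_le] at this
  rw [pPlus]; linarith [this.2]

/-- The single-site transition probability for outcome `c`. -/
noncomputable def qval (P : PCA d) (x : Site d) (η : Config (Site d)) (c : Bool) : ℝ :=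
  if c then pPlus P.r x η else 1 - pPlus P.r x η

lemma qval_nonneg (P : PCA d) (x : Site d) (η : Config (Site d)) (c : Bool) :
    0 ≤ qval P x η c := by
  rcases c with _ | _
  · simp only [qval, if_false, Bool.false_eq_true]
    linarith [pPlus_le_one P x η]
  · simpa [qval] using pPlus_nonneg P x η

lemma qval_le_one (P : PCA d) (x : Site d) (η : Config (Site d)) (c : Bool) :
    qval P x η c ≤ 1 := by
  rcases c with _ | _
  · simp only [qval, if_false, Bool.false_eq_true]
    linarith [pPlus_nonneg P x η]
  · simpa [qval] using pPlus_le_one P x η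

lemma ker_cyl_toReal (P : PCA d) (η : Config (Site d)) (Λ : Finset (Site d))
    (b : Site d → Bool) :
    (P.ker η (cyl Λ b)).toReal = ∏ x ∈ Λ, qval P x η (b x) := by
  have hq : ∀ x ∈ Λ, (if b x then pPlus P.r x η else 1 - pPlus P.r x η) = qval P x η (b x) :=
    fun x _ => rfl
  have hnn : ∀ x ∈ Λ, (0:ℝ) ≤ qval P x η (b x) := fun x _ => qval_nonneg P x η (b x)
  rw [P.ker_marginal η Λ b, Finset.prod_congr rfl fun x hx => by rw [hq x hx],
    ← ENNReal.ofReal_prod_of_nonneg hnn, ENNReal.toReal_ofReal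
    (Finset.prod_nonneg hnn)]

lemma Pop_eq_sum_local (P : PCA d) {Λ : Finset (Site d)} {f : Config (Site d) → ℝ}
    (hf : LocalOn Λ f) (η : Config (Site d)) :
    Pop P f η = ∑ b : Λ → Bool, f (extb Λ b) * ∏ x ∈ Λ, qval P x η (extb Λ b x) := by
  haveI := P.ker_prob η
  rw [Pop, integral_local _ hf]
  exact Finset.sum_congr rfl fun b _ => by rw [ker_cyl_toReal]

instance Pmeas_prob (P : PCA d) (μ : Measure (Config (Site d))) [IsProbabilityMeasure μ] :
    IsProbabilityMeasure (Pmeas P μ) := by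
  constructor
  rw [Pmeas, Measure.bind_apply MeasurableSet.univ P.ker_meas.aemeasurable]
  have : ∀ η, P.ker η Set.univ = 1 := fun η => (P.ker_prob η).measure_univ
  simp [this]

lemma iterPmeas_prob (P : PCA d) (μ : Measure (Config (Site d))) [IsProbabilityMeasure μ]
    (n : ℕ) : IsProbabilityMeasure ((Pmeas P)^[n] μ) := by
  induction n with
  | zero => simpa
  | succ k ih =>
    rw [Function.iterate_succ_apply']
    exact @Pmeas_prob d P _ ih

lemma Pop_lintegral_repr (P : PCA d) {f : Config (Site d) → ℝ} (hm : Measurable f)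
    (h0 : ∀ σ, 0 ≤ f σ) (η : Config (Site d)) :
    Pop P f η = (∫⁻ σ, ENNReal.ofReal (f σ) ∂(P.ker η)).toReal := by
  rw [Pop, integral_eq_lintegral_of_nonneg_ae (Filter.Eventually.of_forall h0)
    hm.aestronglyMeasurable]

lemma Pop_measurable (P : PCA d) {f : Config (Site d) → ℝ} (hm : Measurable f)
    (h0 : ∀ σ, 0 ≤ f σ) : Measurable (Pop P f) := by
  have : Pop P f = fun η => (∫⁻ σ, ENNReal.ofReal (f σ) ∂(P.ker η)).toReal := by
    funext η; exact Pop_lintegral_repr P hm h0 η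
  rw [this]
  exact ENNReal.measurable_toReal.comp
    ((Measure.measurable_lintegral (hm.ennreal_ofReal)).comp P.ker_meas)

lemma Pop_nonneg (P : PCA d) {f : Config (Site d) → ℝ} (h0 : ∀ σ, 0 ≤ f σ)
    (η : Config (Site d)) : 0 ≤ Pop P f η :=
  integral_nonneg h0

lemma Pop_le_bound (P : PCA d) {f : Config (Site d) → ℝ} {B : ℝ} (hm : Measurable f)
    (h0 : ∀ σ, 0 ≤ f σ) (hB : ∀ σ, f σ ≤ B) (η : Config (Site d)) : Pop P f η ≤ B := by
  haveI := P.ker_prob η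
  have h1 : Pop P f η ≤ ∫ _σ, B ∂(P.ker η) := by
    apply integral_mono _ (integrable_const B) hB
    exact integrable_of_bounded_meas hm (B := B) fun σ => by
      rw [abs_of_nonneg (h0 σ)]; exact hB σ
  simpa using h1

lemma integral_Pmeas (P : PCA d) (μ : Measure (Config (Site d))) [IsProbabilityMeasure μ]
    {f : Config (Site d) → ℝ} {B : ℝ} (hm : Measurable f) (h0 : ∀ σ, 0 ≤ f σ)
    (hB : ∀ σ, f σ ≤ B) :
    ∫ σ, f σ ∂(Pmeas P μ) = ∫ η, Pop P f η ∂μ := by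
  haveI : IsProbabilityMeasure (Pmeas P μ) := Pmeas_prob P μ
  rw [integral_eq_lintegral_of_nonneg_ae (Filter.Eventually.of_forall h0)
    hm.aestronglyMeasurable,
    integral_eq_lintegral_of_nonneg_ae
      (Filter.Eventually.of_forall (Pop_nonneg P h0))
      (Pop_measurable P hm h0).aestronglyMeasurable]
  rw [Pmeas, Measure.lintegral_bind P.ker_meas.aemeasurable hm.ennreal_ofReal.aemeasurable]
  congr 1
  apply lintegral_congr
  intro η
  rw [Pop_lintegral_repr P hm h0 η, ENNReal.ofReal_toReal]
  haveI := P.ker_prob η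
  have hle : (∫⁻ σ, ENNReal.ofReal (f σ) ∂(P.ker η)) ≤ ENNReal.ofReal B := by
    calc (∫⁻ σ, ENNReal.ofReal (f σ) ∂(P.ker η))
        ≤ ∫⁻ _σ, ENNReal.ofReal B ∂(P.ker η) :=
          lintegral_mono fun σ => ENNReal.ofReal_le_ofReal (hB σ)
      _ = ENNReal.ofReal B := by simp
  exact ne_top_of_le_ne_top ENNReal.ofReal_ne_top hle

lemma Pop_jensen_exp (P : PCA d) {f : Config (Site d) → ℝ} {B : ℝ} (hm : Measurable f)
    (hB : ∀ σ, |f σ| ≤ B) (η : Config (Site d)) :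
    Real.exp (Pop P f η) ≤ Pop P (fun σ => Real.exp (f σ)) η := by
  haveI := P.ker_prob η
  haveI : NeZero (P.ker η) := ⟨IsProbabilityMeasure.ne_zero _⟩
  have h := ConvexOn.map_average_le (μ := P.ker η) (f := f) convexOn_exp Real.continuousOn_exp isClosed_univ
    (Filter.Eventually.of_forall fun σ => Set.mem_univ (f σ))
    (integrable_of_bounded_meas hm hB)
    (integrable_of_bounded_meas (Real.measurable_exp.comp hm)
      (B := Real.exp B) fun σ => by
        show |Real.exp (f σ)| ≤ Real.exp B
        rw [abs_of_nonneg (Real.exp_pos _).le]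
        exact Real.exp_le_exp.2 (le_of_abs_le (hB σ)))
  rw [average_eq_integral, average_eq_integral] at h
  exact h

end Layer3
section Layer4
open MeasureTheory

variable {d : ℕ}

lemma measurable_shift (a : Site d) : Measurable (shift a) :=
  measurable_pi_lambda _ fun x => measurable_pi_apply (x + a)

lemma hfun_shift (r : Finset (Site d) → ℝ) (x a : Site d) (η : Config (Site d)) :
    hfun r x (shift a η) = hfun r (x + a) η := by
  rw [hfun, hfun]
  apply tsum_congr
  intro A
  congr 1
  apply Finset.prod_congr rfl
  intro y _
  rw [shift]
  congr 1
  rw [add_assoc]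

lemma pPlus_shift (r : Finset (Site d) → ℝ) (x a : Site d) (η : Config (Site d)) :
    pPlus r x (shift a η) = pPlus r (x + a) η := by
  rw [pPlus, pPlus, hfun_shift]
  rfl

lemma shift_preimage_cyl (a : Site d) (Λ : Finset (Site d)) (b : Site d → Bool) :
    shift a ⁻¹' cyl Λ b = cyl (Λ.image (· + a)) (fun y => b (y - a)) := by
  ext σ
  simp only [Set.mem_preimage, cyl, Set.mem_setOf_eq, Finset.mem_image]
  constructor
  · rintro h y ⟨x, hx, rfl⟩
    rw [add_sub_cancel_right]
    exact h x hx
  · intro h x hx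
    have := h (x + a) ⟨x, hx, rfl⟩
    rwa [add_sub_cancel_right] at this

lemma ker_shift (P : PCA d) (η : Config (Site d)) (a : Site d) :
    (P.ker η).map (shift a) = P.ker (shift a η) := by
  haveI := P.ker_prob η
  haveI := P.ker_prob (shift a η)
  haveI : IsProbabilityMeasure ((P.ker η).map (shift a)) :=
    Measure.isProbabilityMeasure_map (measurable_shift a).aemeasurable
  apply measure_ext_cyl
  intro Λ b
  rw [Measure.map_apply (measurable_shift a) (measurableSet_cyl _ _),
    shift_preimage_cyl, P.ker_marginal, P.ker_marginal,
    Finset.prod_image (fun x _ y _ h => by simpa using h)]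
  apply Finset.prod_congr rfl
  intro x _
  rw [add_sub_cancel_right, pPlus_shift]

lemma TransInv_Pmeas (P : PCA d) {μ : Measure (Config (Site d))} (hTI : TransInv μ) :
    TransInv (Pmeas P μ) := by
  intro a
  ext s hs
  rw [Measure.map_apply (measurable_shift a) hs, Pmeas,
    Measure.bind_apply ((measurable_shift a) hs) P.ker_meas.aemeasurable,
    Measure.bind_apply hs P.ker_meas.aemeasurable]
  have hpt : ∀ η, P.ker η (shift a ⁻¹' s) = P.ker (shift a η) s := by
    intro η
    rw [← ker_shift P η a, Measure.map_apply (measurable_shift a) hs]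
  rw [lintegral_congr hpt]
  have h2 := lintegral_map (μ := μ) (f := fun η => P.ker η s) (g := shift a)
    ((Measure.measurable_coe hs).comp P.ker_meas) (measurable_shift a)
  rw [hTI a] at h2
  exact h2.symm

lemma TransInv_iter (P : PCA d) {μ : Measure (Config (Site d))} (hTI : TransInv μ)
    (n : ℕ) : TransInv ((Pmeas P)^[n] μ) := by
  induction n with
  | zero => simpa
  | succ k ih =>
    rw [Function.iterate_succ_apply']
    exact TransInv_Pmeas P ih

lemma Pop_shift (P : PCA d) {f : Config (Site d) → ℝ} (hm : Measurable f)
    (a : Site d) (η : Config (Site d)) :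
    Pop P f (shift a η) = Pop P (fun σ => f (shift a σ)) η := by
  rw [Pop, Pop, ← ker_shift P η a,
    integral_map (measurable_shift a).aemeasurable hm.aestronglyMeasurable]

lemma PopIter_props (P : PCA d) {f : Config (Site d) → ℝ} {B : ℝ} (hm : Measurable f)
    (h0 : ∀ σ, 0 ≤ f σ) (hB : ∀ σ, f σ ≤ B) (k : ℕ) :
    Measurable ((Pop P)^[k] f) ∧ (∀ σ, 0 ≤ (Pop P)^[k] f σ) ∧
      (∀ σ, (Pop P)^[k] f σ ≤ B) := by
  induction k with
  | zero => exact ⟨hm, h0, hB⟩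
  | succ j ih =>
    rw [Function.iterate_succ_apply']
    exact ⟨Pop_measurable P ih.1 ih.2.1, fun σ => Pop_nonneg P ih.2.1 σ,
      fun σ => Pop_le_bound P ih.1 ih.2.1 ih.2.2 σ⟩

lemma integral_iterPmeas (P : PCA d) (μ : Measure (Config (Site d)))
    [IsProbabilityMeasure μ] (n : ℕ) :
    ∀ {f : Config (Site d) → ℝ} {B : ℝ}, Measurable f → (∀ σ, 0 ≤ f σ) →
      (∀ σ, f σ ≤ B) →
    ∫ σ, f σ ∂((Pmeas P)^[n] μ) = ∫ η, (Pop P)^[n] f η ∂μ := by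
  induction n with
  | zero => intro f B _ _ _; rfl
  | succ k ih =>
    intro f B hm h0 hB
    haveI : IsProbabilityMeasure ((Pmeas P)^[k] μ) := iterPmeas_prob P μ k
    calc ∫ σ, f σ ∂((Pmeas P)^[k+1] μ)
        = ∫ σ, f σ ∂(Pmeas P ((Pmeas P)^[k] μ)) := by
          rw [Function.iterate_succ_apply']
      _ = ∫ η, Pop P f η ∂((Pmeas P)^[k] μ) := integral_Pmeas P _ hm h0 hB
      _ = ∫ η, (Pop P)^[k] (Pop P f) η ∂μ :=
          ih (Pop_measurable P hm h0) (fun σ => Pop_nonneg P h0 σ)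
            (fun σ => Pop_le_bound P hm h0 hB σ)
      _ = ∫ η, (Pop P)^[k+1] f η ∂μ := by rw [Function.iterate_succ_apply (Pop P) k f]

lemma exp_chain (P : PCA d) (μ : Measure (Config (Site d)))
    [IsProbabilityMeasure μ] (n : ℕ) :
    ∀ {f : Config (Site d) → ℝ} {B : ℝ}, Measurable f → (∀ σ, 0 ≤ f σ) →
      (∀ σ, f σ ≤ B) →
    ∫ η, Real.exp ((Pop P)^[n] f η) ∂μ ≤
      ∫ σ, Real.exp (f σ) ∂((Pmeas P)^[n] μ) := by
  induction n with
  | zero => intro f B _ _ _; exact le_rfl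
  | succ k ih =>
    intro f B hm h0 hB
    haveI : IsProbabilityMeasure ((Pmeas P)^[k] μ) := iterPmeas_prob P μ k
    have hB0 : (0:ℝ) ≤ B := le_trans (h0 (fun _ => false)) (hB (fun _ => false))
    have habs : ∀ σ, |f σ| ≤ B := fun σ => abs_le.2 ⟨by linarith [h0 σ], hB σ⟩
    have hPm : Measurable (Pop P f) := Pop_measurable P hm h0
    have hP0 : ∀ σ, 0 ≤ Pop P f σ := fun σ => Pop_nonneg P h0 σ
    have hPB : ∀ σ, Pop P f σ ≤ B := fun σ => Pop_le_bound P hm h0 hB σ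
    have hem : Measurable fun σ => Real.exp (f σ) := Real.measurable_exp.comp hm
    have he0 : ∀ σ, (0:ℝ) ≤ Real.exp (f σ) := fun σ => (Real.exp_pos _).le
    have heB : ∀ σ, Real.exp (f σ) ≤ Real.exp B :=
      fun σ => Real.exp_le_exp.2 (hB σ)
    calc ∫ η, Real.exp ((Pop P)^[k+1] f η) ∂μ
        = ∫ η, Real.exp ((Pop P)^[k] (Pop P f) η) ∂μ := by
          rw [Function.iterate_succ_apply (Pop P) k f]
      _ ≤ ∫ σ, Real.exp (Pop P f σ) ∂((Pmeas P)^[k] μ) := ih hPm hP0 hPB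
      _ ≤ ∫ σ, Pop P (fun τ => Real.exp (f τ)) σ ∂((Pmeas P)^[k] μ) := by
          apply integral_mono
          · exact integrable_of_bounded_meas (Real.measurable_exp.comp hPm)
              (B := Real.exp B) fun σ => by
                rw [abs_of_nonneg (Real.exp_pos _).le]
                exact Real.exp_le_exp.2 (hPB σ)
          · exact integrable_of_bounded_meas (Pop_measurable P hem he0)
              (B := Real.exp B) fun σ => by
                rw [abs_of_nonneg (Pop_nonneg P he0 σ)]
                exact Pop_le_bound P hem he0 heB σ
          · exact fun σ => Pop_jensen_exp P hm habs σ
      _ = ∫ σ, Real.exp (f σ) ∂(Pmeas P ((Pmeas P)^[k] μ)) :=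
          (integral_Pmeas P _ hem he0 heB).symm
      _ = ∫ σ, Real.exp (f σ) ∂((Pmeas P)^[k+1] μ) := by
          rw [Function.iterate_succ_apply' (Pmeas P) k μ]

lemma PopIter_shift (P : PCA d) {f : Config (Site d) → ℝ} {B : ℝ} (hm : Measurable f)
    (h0 : ∀ σ, 0 ≤ f σ) (hB : ∀ σ, f σ ≤ B) (a : Site d) (k : ℕ) (η : Config (Site d)) :
    (Pop P)^[k] f (shift a η) = (Pop P)^[k] (fun σ => f (shift a σ)) η := by
  induction k generalizing η with
  | zero => rfl
  | succ j ih =>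
    rw [Function.iterate_succ_apply' (Pop P) j f,
      Function.iterate_succ_apply' (Pop P) j (fun σ => f (shift a σ)),
      Pop_shift P (PopIter_props P hm h0 hB j).1 a η]
    congr 1
    funext η'
    exact ih η'

lemma Pop_sum_smul (P : PCA d) {α : Type*} (s : Finset α) (c : ℝ)
    (g : α → Config (Site d) → ℝ) {B : ℝ} (hm : ∀ x, Measurable (g x))
    (h0 : ∀ x σ, 0 ≤ g x σ) (hB : ∀ x σ, g x σ ≤ B) (η : Config (Site d)) :
    Pop P (fun σ => c * ∑ x ∈ s, g x σ) η = c * ∑ x ∈ s, Pop P (g x) η := by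
  haveI := P.ker_prob η
  have hint : ∀ x ∈ s, Integrable (g x) (P.ker η) := fun x _ =>
    integrable_of_bounded_meas (hm x) (B := max B 0) fun σ =>
      abs_le.2 ⟨by linarith [h0 x σ, le_max_right B (0:ℝ)],
        le_trans (hB x σ) (le_max_left _ _)⟩
  rw [Pop, integral_const_mul, integral_finset_sum s hint]
  rfl

lemma PopIter_sum_smul (P : PCA d) {α : Type*} (s : Finset α) (c : ℝ) (hc : 0 ≤ c)
    (g : α → Config (Site d) → ℝ) {B : ℝ} (hB0 : 0 ≤ B) (hm : ∀ x, Measurable (g x))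
    (h0 : ∀ x σ, 0 ≤ g x σ) (hB : ∀ x σ, g x σ ≤ B) (k : ℕ) (η : Config (Site d)) :
    (Pop P)^[k] (fun σ => c * ∑ x ∈ s, g x σ) η =
      c * ∑ x ∈ s, (Pop P)^[k] (g x) η := by
  induction k generalizing g with
  | zero => rfl
  | succ j ih =>
    rw [Function.iterate_succ_apply (Pop P) j]
    have hstep : Pop P (fun σ => c * ∑ x ∈ s, g x σ) =
        fun η' => c * ∑ x ∈ s, Pop P (g x) η' := by
      funext η'
      exact Pop_sum_smul P s c g hm h0 hB η'
    rw [hstep]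
    rw [ih (fun x => Pop P (g x)) (fun x => Pop_measurable P (hm x) (h0 x))
      (fun x σ => Pop_nonneg P (h0 x) σ)
      (fun x σ => Pop_le_bound P (hm x) (h0 x) (hB x) σ)]
    simp only [Function.iterate_succ_apply (Pop P) j]

end Layer4
section Layer5
open MeasureTheory

variable {d : ℕ}

lemma mem_cube {n : ℕ} {x : Site d} : x ∈ cube d n ↔ ∀ i, -(n:ℤ) ≤ x i ∧ x i ≤ n := by
  rw [cube, Fintype.mem_piFinset]
  simp [Finset.mem_Icc]

lemma cube_mono {m n : ℕ} (h : m ≤ n) : cube d m ⊆ cube d n := by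
  intro x hx
  rw [mem_cube] at hx ⊢
  intro i
  have := hx i
  have h' : (m:ℤ) ≤ n := by exact_mod_cast h
  exact ⟨le_trans (by linarith) this.1, le_trans this.2 h'⟩

lemma add_mem_cube {m R : ℕ} {x y : Site d} (hx : x ∈ cube d m) (hy : y ∈ cube d R) :
    y + x ∈ cube d (m + R) := by
  rw [mem_cube] at hx hy ⊢
  intro i
  have h1 := hx i
  have h2 := hy i
  simp only [Pi.add_apply]
  push_cast
  constructor <;> linarith

lemma exists_cube_superset (Λ : Finset (Site d)) : ∃ M : ℕ, Λ ⊆ cube d M := by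
  classical
  refine ⟨Λ.sup fun v => Finset.univ.sup fun i => (v i).natAbs, fun x hx => ?_⟩
  rw [mem_cube]
  intro i
  have h1 : (x i).natAbs ≤ Λ.sup fun v => Finset.univ.sup fun i => (v i).natAbs :=
    le_trans (Finset.le_sup (f := fun j => (x j).natAbs) (Finset.mem_univ i))
      (Finset.le_sup (f := fun v => Finset.univ.sup fun i => (v i).natAbs) hx)
  have h2 : |x i| ≤ ((Λ.sup fun v => Finset.univ.sup fun i => (v i).natAbs : ℕ) : ℤ) := by
    rw [Int.abs_eq_natAbs]
    exact_mod_cast h1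
  exact abs_le.mp h2

lemma card_cube (n : ℕ) : (cube d n).card = (2 * n + 1) ^ d := by
  rw [cube, Fintype.card_piFinset]
  have h : ∀ _i : Fin d, (Finset.Icc (-(n:ℤ)) (n:ℤ)).card = 2 * n + 1 := by
    intro i
    rw [Int.card_Icc]
    omega
  rw [Finset.prod_congr rfl fun i _ => h i, Finset.prod_const, Finset.card_univ,
    Fintype.card_fin]

/-- Tail of the interaction outside the cube of radius `R`. -/
noncomputable def tailP (P : PCA d) (R : ℕ) : ℝ :=
  ∑' A : Finset (Site d), if A ⊆ cube d R then 0 else |P.r A|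

lemma summable_tail_fn (P : PCA d) (R : ℕ) :
    Summable fun A : Finset (Site d) => if A ⊆ cube d R then 0 else |P.r A| := by
  apply Summable.of_nonneg_of_le (fun A => by positivity) (fun A => ?_) P.summable_r
  split_ifs
  · positivity
  · exact le_rfl

lemma tailP_nonneg (P : PCA d) (R : ℕ) : 0 ≤ tailP P R :=
  tsum_nonneg fun A => by positivity

lemma tail_small (P : PCA d) {θ : ℝ} (hθ : 0 < θ) : ∃ R : ℕ, tailP P R ≤ θ := by
  classical
  set S := ∑' A : Finset (Site d), |P.r A| with hS
  have hhs : HasSum (fun A : Finset (Site d) => |P.r A|) S := P.summable_r.hasSum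
  have hev : ∀ᶠ T in (Filter.atTop : Filter (Finset (Finset (Site d)))),
      S - θ < ∑ A ∈ T, |P.r A| :=
    hhs.eventually (eventually_gt_nhds (by linarith))
  obtain ⟨T₀, hT₀⟩ := hev.exists
  obtain ⟨R, hR⟩ := exists_cube_superset (T₀.biUnion fun A => A)
  refine ⟨R, ?_⟩
  have hsub : ∀ A ∈ T₀, A ⊆ cube d R := fun A hA =>
    subset_trans (fun y hy => Finset.mem_biUnion.2 ⟨A, hA, hy⟩) hR
  have hsummem : Summable fun A : Finset (Site d) => if A ∈ T₀ then 0 else |P.r A| := by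
    apply Summable.of_nonneg_of_le (fun A => by positivity) (fun A => ?_) P.summable_r
    split_ifs
    · positivity
    · exact le_rfl
  have hle1 : tailP P R ≤ ∑' A : Finset (Site d), if A ∈ T₀ then 0 else |P.r A| := by
    apply Summable.tsum_le_tsum _ (summable_tail_fn P R) hsummem
    intro A
    by_cases hA : A ∈ T₀
    · simp [hA, hsub A hA]
    · simp only [hA, if_false]
      split_ifs
      · positivity
      · exact le_rfl
  have hsummem2 : Summable fun A : Finset (Site d) => if A ∈ T₀ then |P.r A| else 0 := by
    apply Summable.of_nonneg_of_le (fun A => by positivity) (fun A => ?_) P.summable_r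
    split_ifs
    · exact le_rfl
    · positivity
  have hsplit : (∑ A ∈ T₀, |P.r A|) +
      (∑' A : Finset (Site d), if A ∈ T₀ then 0 else |P.r A|) = S := by
    have h1 : (∑' A : Finset (Site d), if A ∈ T₀ then |P.r A| else 0) = ∑ A ∈ T₀, |P.r A| := by
      rw [tsum_eq_sum (s := T₀) (fun A hA => by simp [hA])]
      exact Finset.sum_congr rfl fun A hA => by simp [hA]
    rw [← h1, ← Summable.tsum_add hsummem2 hsummem]
    apply tsum_congr
    intro A
    split_ifs <;> simp
  linarith [hle1, hsplit, hT₀]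

lemma summable_hterm (r : Finset (Site d) → ℝ) (hs : Summable fun A => |r A|)
    (x : Site d) (η : Config (Site d)) :
    Summable fun A : Finset (Site d) => r A * ∏ y ∈ A, spin (η (y + x)) := by
  have habs : ∀ A : Finset (Site d), |r A * ∏ y ∈ A, spin (η (y + x))| = |r A| := by
    intro A
    rw [abs_mul, Finset.abs_prod]
    rw [Finset.prod_congr rfl fun y _ => abs_spin (η (y + x))]
    simp
  exact Summable.of_abs (hs.congr fun A => (habs A).symm)

lemma abs_prod_spin_le_one (η : Config (Site d)) (x : Site d) (A : Finset (Site d)) :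
    |∏ y ∈ A, spin (η (y + x))| = 1 := by
  rw [Finset.abs_prod, Finset.prod_congr rfl fun y _ => abs_spin (η (y + x))]
  simp

lemma hfun_diff (P : PCA d) (x : Site d) {η η' : Config (Site d)} (R : ℕ)
    (hag : ∀ y ∈ cube d R, η (y + x) = η' (y + x)) :
    |hfun P.r x η - hfun P.r x η'| ≤ 2 * tailP P R := by
  have hs1 := summable_hterm P.r P.summable_r x η
  have hs2 := summable_hterm P.r P.summable_r x η'
  rw [hfun, hfun, ← Summable.tsum_sub hs1 hs2]
  set F := fun A : Finset (Site d) =>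
    P.r A * ∏ y ∈ A, spin (η (y + x)) - P.r A * ∏ y ∈ A, spin (η' (y + x)) with hF
  have hbF : ∀ A, |F A| ≤ if A ⊆ cube d R then 0 else 2 * |P.r A| := by
    intro A
    split_ifs with hsub
    · have : F A = 0 := by
        rw [hF]
        simp only []
        rw [Finset.prod_congr rfl fun y hy => by rw [hag y (hsub hy)]]
        ring
      simp [this]
    · rw [hF]
      simp only []
      rw [← mul_sub, abs_mul]
      have : |(∏ y ∈ A, spin (η (y + x))) - ∏ y ∈ A, spin (η' (y + x))| ≤ 2 := by
        calc |(∏ y ∈ A, spin (η (y + x))) - ∏ y ∈ A, spin (η' (y + x))|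
            ≤ |∏ y ∈ A, spin (η (y + x))| + |∏ y ∈ A, spin (η' (y + x))| := abs_sub _ _
          _ = 2 := by rw [abs_prod_spin_le_one, abs_prod_spin_le_one]; norm_num
      calc |P.r A| * |(∏ y ∈ A, spin (η (y + x))) - ∏ y ∈ A, spin (η' (y + x))|
          ≤ |P.r A| * 2 := mul_le_mul_of_nonneg_left this (abs_nonneg _)
        _ = 2 * |P.r A| := by ring
  have hsum2 : Summable fun A : Finset (Site d) =>
      if A ⊆ cube d R then 0 else 2 * |P.r A| := by
    have := (summable_tail_fn P R).mul_left 2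
    apply this.congr
    intro A
    split_ifs <;> ring
  have hsumF : Summable fun A => |F A| := by
    apply Summable.of_nonneg_of_le (fun A => abs_nonneg _) hbF hsum2
  calc |∑' A, F A| ≤ ∑' A, |F A| := by
        have := norm_tsum_le_tsum_norm (f := F) (by simpa using hsumF)
        simpa using this
    _ ≤ ∑' A : Finset (Site d), if A ⊆ cube d R then 0 else 2 * |P.r A| :=
        Summable.tsum_le_tsum hbF hsumF hsum2
    _ = 2 * tailP P R := by
        rw [tailP, ← tsum_mul_left]
        apply tsum_congr
        intro A
        split_ifs <;> ring

lemma pPlus_diff (P : PCA d) (x : Site d) {η η' : Config (Site d)} (R : ℕ)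
    (hag : ∀ y ∈ cube d R, η (y + x) = η' (y + x)) :
    |pPlus P.r x η - pPlus P.r x η'| ≤ tailP P R := by
  have hx : η x = η' x := by
    have := hag 0 (by
      rw [mem_cube]; intro i; simp only [Pi.zero_apply]
      constructor
      · exact neg_nonpos_of_nonneg (Int.ofNat_nonneg R)
      · exact Int.ofNat_nonneg R)
    simpa using this
  rw [pPlus, pPlus, hx, div_sub_div_same]
  have h1 : 1 + spin (η' x) * hfun P.r x η - (1 + spin (η' x) * hfun P.r x η')
      = spin (η' x) * (hfun P.r x η - hfun P.r x η') := by ring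
  rw [h1, abs_div, abs_mul, abs_spin, one_mul]
  have := hfun_diff P x R hag
  rw [abs_of_nonneg (by norm_num : (0:ℝ) ≤ 2)]
  linarith

lemma qval_diff (P : PCA d) (x : Site d) (η η' : Config (Site d)) (c : Bool) :
    |qval P x η c - qval P x η' c| = |pPlus P.r x η - pPlus P.r x η'| := by
  rcases c with _ | _
  · simp only [qval, if_false, Bool.false_eq_true]
    rw [show 1 - pPlus P.r x η - (1 - pPlus P.r x η')
      = -(pPlus P.r x η - pPlus P.r x η') by ring, abs_neg]
  · simp [qval]

lemma abs_prod_sub_prod {α : Type*} [DecidableEq α] (s : Finset α) (a c : α → ℝ)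
    (ha : ∀ x ∈ s, 0 ≤ a x ∧ a x ≤ 1) (hc : ∀ x ∈ s, 0 ≤ c x ∧ c x ≤ 1) :
    |(∏ x ∈ s, a x) - ∏ x ∈ s, c x| ≤ ∑ x ∈ s, |a x - c x| := by
  classical
  induction s using Finset.induction_on with
  | empty => simp
  | @insert x s hx ih =>
    rw [Finset.prod_insert hx, Finset.prod_insert hx, Finset.sum_insert hx]
    have hax := ha x (Finset.mem_insert_self x s)
    have hcx := hc x (Finset.mem_insert_self x s)
    have ha' : ∀ z ∈ s, 0 ≤ a z ∧ a z ≤ 1 :=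
      fun z hz => ha z (Finset.mem_insert_of_mem hz)
    have hc' : ∀ z ∈ s, 0 ≤ c z ∧ c z ≤ 1 :=
      fun z hz => hc z (Finset.mem_insert_of_mem hz)
    have hprodc : |∏ z ∈ s, c z| ≤ 1 := by
      rw [Finset.abs_prod]
      apply Finset.prod_le_one (fun z hz => abs_nonneg _)
      intro z hz
      rw [abs_of_nonneg (hc' z hz).1]
      exact (hc' z hz).2
    have key : a x * ∏ z ∈ s, a z - c x * ∏ z ∈ s, c z
        = a x * ((∏ z ∈ s, a z) - ∏ z ∈ s, c z) + (a x - c x) * ∏ z ∈ s, c z := by ring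
    rw [key]
    calc |a x * ((∏ z ∈ s, a z) - ∏ z ∈ s, c z) + (a x - c x) * ∏ z ∈ s, c z|
        ≤ |a x * ((∏ z ∈ s, a z) - ∏ z ∈ s, c z)| + |(a x - c x) * ∏ z ∈ s, c z| :=
          abs_add_le _ _
      _ ≤ |(∏ z ∈ s, a z) - ∏ z ∈ s, c z| + |a x - c x| := by
          rw [abs_mul, abs_mul]
          have h1 : |a x| ≤ 1 := by rw [abs_of_nonneg hax.1]; exact hax.2
          have h2 : |a x| * |(∏ z ∈ s, a z) - ∏ z ∈ s, c z|
              ≤ 1 * |(∏ z ∈ s, a z) - ∏ z ∈ s, c z| :=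
            mul_le_mul_of_nonneg_right h1 (abs_nonneg _)
          have h3 : |a x - c x| * |∏ z ∈ s, c z| ≤ |a x - c x| * 1 :=
            mul_le_mul_of_nonneg_left hprodc (abs_nonneg _)
          linarith
      _ ≤ (∑ z ∈ s, |a z - c z|) + |a x - c x| := by
          linarith [ih ha' hc']
      _ = |a x - c x| + ∑ z ∈ s, |a z - c z| := by ring

lemma Pop_local_diff (P : PCA d) {Λ : Finset (Site d)} {f : Config (Site d) → ℝ} {B : ℝ}
    (hloc : LocalOn Λ f) (hB : ∀ σ, |f σ| ≤ B) {η η' : Config (Site d)} (R : ℕ)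
    (hag : ∀ x ∈ Λ, ∀ y ∈ cube d R, η (y + x) = η' (y + x)) :
    |Pop P f η - Pop P f η'| ≤ B * 2 ^ Λ.card * Λ.card * tailP P R := by
  classical
  have hB0 : 0 ≤ B := le_trans (abs_nonneg _) (hB (fun _ => false))
  rw [Pop_eq_sum_local P hloc, Pop_eq_sum_local P hloc, ← Finset.sum_sub_distrib]
  have hterm : ∀ b : Λ → Bool,
      |f (extb Λ b) * (∏ x ∈ Λ, qval P x η (extb Λ b x)) -
        f (extb Λ b) * ∏ x ∈ Λ, qval P x η' (extb Λ b x)|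
      ≤ B * (Λ.card * tailP P R) := by
    intro b
    rw [← mul_sub, abs_mul]
    have hprod : |(∏ x ∈ Λ, qval P x η (extb Λ b x)) -
        ∏ x ∈ Λ, qval P x η' (extb Λ b x)| ≤ Λ.card * tailP P R := by
      calc |(∏ x ∈ Λ, qval P x η (extb Λ b x)) - ∏ x ∈ Λ, qval P x η' (extb Λ b x)|
          ≤ (∑ x ∈ Λ, |qval P x η (extb Λ b x) - qval P x η' (extb Λ b x)|) :=
            abs_prod_sub_prod Λ _ _
              (fun x _ => ⟨qval_nonneg P x η _, qval_le_one P x η _⟩)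
              (fun x _ => ⟨qval_nonneg P x η' _, qval_le_one P x η' _⟩)
        _ ≤ (∑ _x ∈ Λ, tailP P R) := by
            apply Finset.sum_le_sum
            intro x hx
            rw [qval_diff]
            exact pPlus_diff P x R (hag x hx)
        _ = Λ.card * tailP P R := by
            rw [Finset.sum_const, nsmul_eq_mul]
    exact mul_le_mul (hB _) hprod (abs_nonneg _) hB0
  refine le_trans (Finset.abs_sum_le_sum_abs _ _)
    (le_trans (Finset.sum_le_sum (fun b (_ : b ∈ Finset.univ) => hterm b)) (le_of_eq ?_))
  rw [Finset.sum_const, Finset.card_univ, nsmul_eq_mul, Fintype.card_fun,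
    Fintype.card_coe, Fintype.card_bool]
  push_cast
  ring

/-- Localization of a function to a finite window. -/
def locF (Λ : Finset (Site d)) (w : Config (Site d) → ℝ) : Config (Site d) → ℝ :=
  fun σ => w (fun x => if x ∈ Λ then σ x else false)

lemma locF_local (Λ : Finset (Site d)) (w : Config (Site d) → ℝ) :
    LocalOn Λ (locF Λ w) := by
  intro σ τ h
  rw [locF]
  congr 1
  funext x
  by_cases hx : x ∈ Λ
  · simp [hx, h x hx]
  · simp [hx]

lemma Pop_diff_le (P : PCA d) {u v : Config (Site d) → ℝ} {B ε : ℝ}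
    (hum : Measurable u) (hu0 : ∀ σ, 0 ≤ u σ) (huB : ∀ σ, u σ ≤ B)
    (hvm : Measurable v) (hv0 : ∀ σ, 0 ≤ v σ) (hvB : ∀ σ, v σ ≤ B)
    (herr : ∀ σ, |u σ - v σ| ≤ ε) (η : Config (Site d)) :
    |Pop P u η - Pop P v η| ≤ ε := by
  haveI := P.ker_prob η
  have hB0 : 0 ≤ B := le_trans (hu0 (fun _ => false)) (huB (fun _ => false))
  have hiu : Integrable u (P.ker η) := integrable_of_bounded_meas hum
    (B := B) fun σ => abs_le.2 ⟨by linarith [hu0 σ], huB σ⟩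
  have hiv : Integrable v (P.ker η) := integrable_of_bounded_meas hvm
    (B := B) fun σ => abs_le.2 ⟨by linarith [hv0 σ], hvB σ⟩
  rw [Pop, Pop, ← integral_sub hiu hiv]
  calc |∫ σ, (u σ - v σ) ∂(P.ker η)| = ‖∫ σ, (u σ - v σ) ∂(P.ker η)‖ :=
        (Real.norm_eq_abs _).symm
    _ ≤ ∫ σ, ‖u σ - v σ‖ ∂(P.ker η) := norm_integral_le_integral_norm _
    _ = ∫ σ, |u σ - v σ| ∂(P.ker η) := by simp [Real.norm_eq_abs]
    _ ≤ ∫ _σ, ε ∂(P.ker η) := integral_mono (hiu.sub hiv).abs (integrable_const ε) herr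
    _ = ε := by simp

/-- Quantitative quasilocality of the iterates of the transition operator. -/
lemma PopIter_quasilocal (P : PCA d) {g : Config (Site d) → ℝ} {Λg : Finset (Site d)}
    (hloc : LocalOn Λg g) (h0 : ∀ σ, 0 ≤ g σ) (h1 : ∀ σ, g σ ≤ 1) (n : ℕ) :
    ∀ θ : ℝ, 0 < θ → ∃ (M : ℕ) (G : Config (Site d) → ℝ),
      LocalOn (cube d M) G ∧ (∀ σ, 0 ≤ G σ) ∧ (∀ σ, G σ ≤ 1) ∧
      ∀ σ, |(Pop P)^[n] g σ - G σ| ≤ θ := by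
  induction n with
  | zero =>
    intro θ hθ
    obtain ⟨M, hM⟩ := exists_cube_superset Λg
    exact ⟨M, g, hloc.mono hM, h0, h1, fun σ => by simp [hθ.le]⟩
  | succ k ih =>
    intro θ hθ
    obtain ⟨M₁, G₁, hG₁loc, hG₁0, hG₁1, hG₁err⟩ := ih (θ/2) (by linarith)
    have hG₁m : Measurable G₁ := hG₁loc.measurable
    set c₁ : ℝ := (2:ℝ) ^ (cube d M₁).card * (cube d M₁).card with hc₁
    have hc₁0 : 0 ≤ c₁ := by positivity
    obtain ⟨R, hR⟩ := tail_small P (θ := θ / (2 * (c₁ + 1))) (div_pos hθ (by linarith))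
    refine ⟨M₁ + R, locF (cube d (M₁ + R)) (Pop P G₁), locF_local _ _, ?_, ?_, ?_⟩
    · intro σ
      exact Pop_nonneg P hG₁0 _
    · intro σ
      exact Pop_le_bound P hG₁m hG₁0 hG₁1 _
    · intro σ
      set σ' : Config (Site d) := fun x => if x ∈ cube d (M₁ + R) then σ x else false
        with hσ'
      have hw := PopIter_props P hloc.measurable h0 h1 k
      have step1 : |(Pop P)^[k+1] g σ - Pop P G₁ σ| ≤ θ/2 := by
        rw [Function.iterate_succ_apply' (Pop P) k g]
        exact Pop_diff_le P (B := 1) hw.1 hw.2.1 hw.2.2 hG₁m hG₁0 hG₁1 hG₁err σ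
      have hagree : ∀ x ∈ cube d M₁, ∀ y ∈ cube d R, σ (y + x) = σ' (y + x) := by
        intro x hx y hy
        have hmem : y + x ∈ cube d (M₁ + R) := add_mem_cube hx hy
        rw [hσ']
        simp [hmem]
      have step2 : |Pop P G₁ σ - Pop P G₁ σ'| ≤ θ/2 := by
        have hd := Pop_local_diff P (B := 1) hG₁loc
          (fun τ => abs_le.2 ⟨by linarith [hG₁0 τ], hG₁1 τ⟩) R hagree
        calc |Pop P G₁ σ - Pop P G₁ σ'|
            ≤ 1 * 2 ^ (cube d M₁).card * (cube d M₁).card * tailP P R := hd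
          _ = c₁ * tailP P R := by rw [hc₁]; ring
          _ ≤ c₁ * (θ / (2 * (c₁ + 1))) :=
              mul_le_mul_of_nonneg_left hR hc₁0
          _ ≤ θ/2 := by
              rw [mul_div_assoc', div_le_div_iff₀ (by linarith : (0:ℝ) < 2 * (c₁ + 1))
                (by norm_num : (0:ℝ) < 2)]
              nlinarith [hθ.le, hc₁0]
      have hGval : locF (cube d (M₁ + R)) (Pop P G₁) σ = Pop P G₁ σ' := rfl
      rw [hGval]
      calc |(Pop P)^[k+1] g σ - Pop P G₁ σ'|
          ≤ |(Pop P)^[k+1] g σ - Pop P G₁ σ| + |Pop P G₁ σ - Pop P G₁ σ'| := by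
            have := abs_add_le ((Pop P)^[k+1] g σ - Pop P G₁ σ) (Pop P G₁ σ - Pop P G₁ σ')
            simpa using this
        _ ≤ θ/2 + θ/2 := add_le_add step1 step2
        _ = θ := by ring

end Layer5
section Layer6
open MeasureTheory

lemma flipAt_flipAt {ι : Type*} [DecidableEq ι] (σ : Config ι) (x : ι) :
    flipAt (flipAt σ x) x = σ := by
  funext y
  by_cases h : y = x
  · subst h
    simp [flipAt, Function.update_self]
  · simp [flipAt, Function.update_of_ne h]

lemma osc_bddAbove {ι : Type*} [DecidableEq ι] {f : Config ι → ℝ} {B : ℝ}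
    (h0 : ∀ σ, 0 ≤ f σ) (hB : ∀ σ, f σ ≤ B) (x : ι) :
    BddAbove (Set.range fun σ => f (flipAt σ x) - f σ) := by
  refine ⟨B, ?_⟩
  rintro r ⟨σ, rfl⟩
  have := h0 σ
  have := hB (flipAt σ x)
  dsimp
  linarith

lemma osc_nonneg {ι : Type*} [DecidableEq ι] {f : Config ι → ℝ} {B : ℝ}
    (h0 : ∀ σ, 0 ≤ f σ) (hB : ∀ σ, f σ ≤ B) (x : ι) : 0 ≤ osc f x := by
  set σ₀ : Config ι := fun _ => false with hσ₀
  have h1 : f (flipAt σ₀ x) - f σ₀ ≤ osc f x := le_ciSup (osc_bddAbove h0 hB x) σ₀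
  have h2 : f (flipAt (flipAt σ₀ x) x) - f (flipAt σ₀ x) ≤ osc f x :=
    le_ciSup (osc_bddAbove h0 hB x) (flipAt σ₀ x)
  rw [flipAt_flipAt] at h2
  linarith

lemma osc_le {ι : Type*} [DecidableEq ι] {f : Config ι → ℝ} {x : ι} {c : ℝ}
    (h : ∀ σ, f (flipAt σ x) - f σ ≤ c) : osc f x ≤ c :=
  ciSup_le h

lemma osc_local_zero {ι : Type*} [DecidableEq ι] {Λ : Finset ι} {f : Config ι → ℝ}
    (hloc : LocalOn Λ f) {x : ι} (hx : x ∉ Λ) : osc f x = 0 := by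
  have hz : ∀ σ : Config ι, f (flipAt σ x) - f σ = 0 := by
    intro σ
    have : f (flipAt σ x) = f σ := by
      apply hloc
      intro y hy
      have hyx : y ≠ x := fun h => hx (h ▸ hy)
      simp [flipAt, Function.update_of_ne hyx]
    linarith [this]
  rw [osc]
  simp_rw [hz]
  exact ciSup_const

lemma osc_add_le {ι : Type*} [DecidableEq ι] {f g : Config ι → ℝ} {Bf Bg : ℝ}
    (hf0 : ∀ σ, 0 ≤ f σ) (hfB : ∀ σ, f σ ≤ Bf) (hg0 : ∀ σ, 0 ≤ g σ)
    (hgB : ∀ σ, g σ ≤ Bg) (x : ι) :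
    osc (fun σ => f σ + g σ) x ≤ osc f x + osc g x := by
  apply osc_le
  intro σ
  have h1 : f (flipAt σ x) - f σ ≤ osc f x := le_ciSup (osc_bddAbove hf0 hfB x) σ
  have h2 : g (flipAt σ x) - g σ ≤ osc g x := le_ciSup (osc_bddAbove hg0 hgB x) σ
  show f (flipAt σ x) + g (flipAt σ x) - (f σ + g σ) ≤ osc f x + osc g x
  linarith

lemma osc_sum_le {ι α : Type*} [DecidableEq ι] (s : Finset α) (w : α → Config ι → ℝ)
    {B : ℝ} (h0 : ∀ a σ, 0 ≤ w a σ) (hB : ∀ a σ, w a σ ≤ B) (x : ι) :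
    osc (fun σ => ∑ a ∈ s, w a σ) x ≤ ∑ a ∈ s, osc (w a) x := by
  classical
  induction s using Finset.induction_on with
  | empty =>
    simp only [Finset.sum_empty]
    exact osc_le fun σ => by simp
  | @insert a s ha ih =>
    have hrw : (fun σ => ∑ b ∈ insert a s, w b σ)
        = fun σ => w a σ + ∑ b ∈ s, w b σ := by
      funext σ
      rw [Finset.sum_insert ha]
    rw [hrw, Finset.sum_insert ha]
    calc osc (fun σ => w a σ + ∑ b ∈ s, w b σ) x
        ≤ osc (w a) x + osc (fun σ => ∑ b ∈ s, w b σ) x :=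
          osc_add_le (h0 a) (hB a) (fun σ => Finset.sum_nonneg fun b _ => h0 b σ)
            (fun σ => by
              calc ∑ b ∈ s, w b σ ≤ ∑ _b ∈ s, B :=
                    Finset.sum_le_sum (fun b _ => hB b σ)
                _ = s.card * B := by rw [Finset.sum_const, nsmul_eq_mul]) x
      _ ≤ osc (w a) x + ∑ b ∈ s, osc (w b) x := by linarith [ih]

lemma osc_smul_le {ι : Type*} [DecidableEq ι] {f : Config ι → ℝ} {B c : ℝ}
    (hc : 0 ≤ c) (h0 : ∀ σ, 0 ≤ f σ) (hB : ∀ σ, f σ ≤ B) (x : ι) :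
    osc (fun σ => c * f σ) x ≤ c * osc f x := by
  apply osc_le
  intro σ
  have h1 : f (flipAt σ x) - f σ ≤ osc f x := le_ciSup (osc_bddAbove h0 hB x) σ
  show c * f (flipAt σ x) - c * f σ ≤ c * osc f x
  calc c * f (flipAt σ x) - c * f σ = c * (f (flipAt σ x) - f σ) := by ring
    _ ≤ c * osc f x := mul_le_mul_of_nonneg_left h1 hc

lemma shift_flipAt {d : ℕ} (x z : Site d) (σ : Config (Site d)) :
    shift x (flipAt σ z) = flipAt (shift x σ) (z - x) := by
  funext y
  by_cases h : y = z - x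
  · subst h
    simp only [shift, flipAt]
    rw [show z - x + x = z by abel]
    simp [Function.update_self]
  · have h2 : y + x ≠ z := fun hc => h (by rw [← hc]; abel)
    simp [shift, flipAt, Function.update_of_ne h2, Function.update_of_ne h]

lemma shift_surjective {d : ℕ} (x : Site d) : Function.Surjective (shift (d := d) x) := by
  intro τ
  refine ⟨fun y => τ (y - x), ?_⟩
  funext y
  simp [shift]

lemma osc_shift {d : ℕ} (g : Config (Site d) → ℝ) (x z : Site d) :
    osc (fun σ => g (shift x σ)) z = osc g (z - x) := by
  have h1 : (fun σ : Config (Site d) =>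
      (fun σ' => g (shift x σ')) (flipAt σ z) - (fun σ' => g (shift x σ')) σ)
      = (fun τ : Config (Site d) => g (flipAt τ (z - x)) - g τ) ∘ (shift x) := by
    funext σ
    simp only [Function.comp_apply, shift_flipAt]
  rw [osc, osc, iSup, iSup, h1, Function.Surjective.range_comp (shift_surjective x)]

lemma sum_translate_le {d : ℕ} (u : Site d → ℝ) (hu0 : ∀ w, 0 ≤ u w)
    (Λ₀ : Finset (Site d)) (hsupp : ∀ w, w ∉ Λ₀ → u w = 0) (s : Finset (Site d))
    (φ : Site d → Site d) (hφ : ∀ x ∈ s, ∀ y ∈ s, φ x = φ y → x = y) :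
    ∑ x ∈ s, u (φ x) ≤ ∑ w ∈ Λ₀, u w := by
  classical
  rw [← Finset.sum_image hφ]
  calc ∑ w ∈ s.image φ, u w
      = ∑ w ∈ s.image φ ∩ Λ₀, u w := by
        refine (Finset.sum_subset Finset.inter_subset_left ?_).symm
        intro w hw hnw
        apply hsupp
        intro hwΛ
        exact hnw (Finset.mem_inter.2 ⟨hw, hwΛ⟩)
    _ ≤ ∑ w ∈ Λ₀, u w :=
        Finset.sum_le_sum_of_subset_of_nonneg Finset.inter_subset_right
          (fun w _ _ => hu0 w)

/-- The key `‖δ f_m‖₂² ≤ λ² |C_m| κ²` bound for `f_m = λ ∑_{x∈C_m} g∘θ_x`. -/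
lemma oscNormSq_sum_shift {d : ℕ} {g : Config (Site d) → ℝ} {Λ₀ : Finset (Site d)}
    (hloc : LocalOn Λ₀ g) (h0 : ∀ σ, 0 ≤ g σ) (h1 : ∀ σ, g σ ≤ 1)
    (lam : ℝ) (hlam : 0 ≤ lam) (m : ℕ) :
    oscNormSq (fun σ => lam * ∑ x ∈ cube d m, g (shift x σ)) ≤
      lam ^ 2 * (cube d m).card * (∑ w ∈ Λ₀, osc g w) ^ 2 := by
  classical
  set u : Site d → ℝ := osc g with hu
  have hu0 : ∀ w, 0 ≤ u w := fun w => osc_nonneg h0 h1 w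
  have hsupp : ∀ w, w ∉ Λ₀ → u w = 0 := fun w hw => osc_local_zero hloc hw
  set κ : ℝ := ∑ w ∈ Λ₀, u w with hκ
  have hκ0 : 0 ≤ κ := Finset.sum_nonneg fun w _ => hu0 w
  set f : Config (Site d) → ℝ := fun σ => lam * ∑ x ∈ cube d m, g (shift x σ) with hf
  set T₀ : Finset (Site d) := (cube d m).biUnion (fun x => Λ₀.image (· + x)) with hT₀
  -- pointwise oscillation bound
  have hosc_le : ∀ z, osc f z ≤ lam * ∑ x ∈ cube d m, u (z - x) := by
    intro z
    have hstep : osc (fun σ => ∑ x ∈ cube d m, g (shift x σ)) z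
        ≤ ∑ x ∈ cube d m, u (z - x) := by
      calc osc (fun σ => ∑ x ∈ cube d m, g (shift x σ)) z
          ≤ ∑ x ∈ cube d m, osc (fun σ => g (shift x σ)) z :=
            osc_sum_le (cube d m) (fun x σ => g (shift x σ)) (B := 1)
              (fun x σ => h0 _) (fun x σ => h1 _) z
        _ = ∑ x ∈ cube d m, u (z - x) :=
            Finset.sum_congr rfl fun x _ => osc_shift g x z
    calc osc f z ≤ lam * osc (fun σ => ∑ x ∈ cube d m, g (shift x σ)) z := by
          apply osc_smul_le hlam
            (fun σ => Finset.sum_nonneg fun x _ => h0 _)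
            (fun σ => by
              calc ∑ x ∈ cube d m, g (shift x σ) ≤ ∑ _x ∈ cube d m, (1:ℝ) :=
                    Finset.sum_le_sum (fun x _ => h1 _)
                _ = (cube d m).card * 1 := by rw [Finset.sum_const, nsmul_eq_mul])
      _ ≤ lam * ∑ x ∈ cube d m, u (z - x) :=
          mul_le_mul_of_nonneg_left hstep hlam
  have hosc0 : ∀ z, 0 ≤ osc f z := by
    intro z
    apply osc_nonneg (B := lam * (cube d m).card)
      (fun σ => mul_nonneg hlam (Finset.sum_nonneg fun x _ => h0 _))
      (fun σ => by
        apply mul_le_mul_of_nonneg_left _ hlam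
        calc ∑ x ∈ cube d m, g (shift x σ) ≤ ∑ _x ∈ cube d m, (1:ℝ) :=
              Finset.sum_le_sum (fun x _ => h1 _)
          _ = (cube d m).card := by rw [Finset.sum_const, nsmul_eq_mul, mul_one])
  -- vanishing outside T₀
  have hvanish : ∀ z, z ∉ T₀ → osc f z ^ 2 = 0 := by
    intro z hz
    have hzero : ∀ x ∈ cube d m, u (z - x) = 0 := by
      intro x hx
      apply hsupp
      intro hmem
      apply hz
      rw [hT₀, Finset.mem_biUnion]
      exact ⟨x, hx, Finset.mem_image.2 ⟨z - x, hmem, by abel⟩⟩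
    have h1' : osc f z ≤ 0 := by
      have := hosc_le z
      rw [Finset.sum_congr rfl hzero] at this
      simpa using this
    have := hosc0 z
    have : osc f z = 0 := le_antisymm h1' this
    rw [this]
    ring
  have htsum : oscNormSq f = ∑ z ∈ T₀, osc f z ^ 2 := by
    rw [oscNormSq]
    exact tsum_eq_sum fun z hz => hvanish z hz
  rw [htsum]
  -- Young-type bound
  have hbound : ∀ z ∈ T₀, osc f z ^ 2 ≤ lam ^ 2 *
      ((∑ x ∈ cube d m, u (z - x)) * κ) := by
    intro z _
    have h2 := hosc_le z
    have h3 : osc f z ^ 2 ≤ (lam * ∑ x ∈ cube d m, u (z - x)) ^ 2 := by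
      apply sq_le_sq' _ h2
      have : 0 ≤ lam * ∑ x ∈ cube d m, u (z - x) :=
        mul_nonneg hlam (Finset.sum_nonneg fun x _ => hu0 _)
      linarith [hosc0 z]
    have h4 : (∑ x ∈ cube d m, u (z - x)) ≤ κ :=
      sum_translate_le u hu0 Λ₀ hsupp (cube d m) (fun x => z - x)
        (fun x _ y _ h => by
          have h' : z - x = z - y := h
          have h2 := congrArg (fun w => z - w) h'
          simpa using h2)
    calc osc f z ^ 2 ≤ (lam * ∑ x ∈ cube d m, u (z - x)) ^ 2 := h3
      _ = lam ^ 2 * ((∑ x ∈ cube d m, u (z - x)) * (∑ x ∈ cube d m, u (z - x))) := by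
          ring
      _ ≤ lam ^ 2 * ((∑ x ∈ cube d m, u (z - x)) * κ) := by
          apply mul_le_mul_of_nonneg_left _ (sq_nonneg lam)
          exact mul_le_mul_of_nonneg_left h4
            (Finset.sum_nonneg fun x _ => hu0 _)
  calc ∑ z ∈ T₀, osc f z ^ 2
      ≤ ∑ z ∈ T₀, lam ^ 2 * ((∑ x ∈ cube d m, u (z - x)) * κ) :=
        Finset.sum_le_sum hbound
    _ = lam ^ 2 * κ * ∑ z ∈ T₀, ∑ x ∈ cube d m, u (z - x) := by
        rw [Finset.mul_sum]
        exact Finset.sum_congr rfl fun z _ => by ring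
    _ = lam ^ 2 * κ * ∑ x ∈ cube d m, ∑ z ∈ T₀, u (z - x) := by
        rw [Finset.sum_comm]
    _ ≤ lam ^ 2 * κ * ∑ _x ∈ cube d m, κ := by
        apply mul_le_mul_of_nonneg_left _ (mul_nonneg (sq_nonneg lam) hκ0)
        apply Finset.sum_le_sum
        intro x _
        exact sum_translate_le u hu0 Λ₀ hsupp T₀ (fun z => z - x)
          (fun z _ z' _ h => by
            have h' : z - x = z' - x := h
            have h2 := congrArg (fun w => w + x) h'
            simpa using h2)
    _ = lam ^ 2 * (cube d m).card * κ ^ 2 := by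
        rw [Finset.sum_const, nsmul_eq_mul]
        ring

end Layer6
section Layer7
open MeasureTheory

variable {d : ℕ}

lemma exp_integral_pos (ν : Measure (Config (Site d))) [IsProbabilityMeasure ν]
    {w : Config (Site d) → ℝ} {B : ℝ} (hm : Measurable w) (habs : ∀ σ, |w σ| ≤ B) :
    0 < ∫ σ, Real.exp (w σ) ∂ν := by
  have hint : Integrable (fun σ => Real.exp (w σ)) ν :=
    integrable_of_bounded_meas (Real.measurable_exp.comp hm) (B := Real.exp B)
      fun σ => by
        rw [abs_of_nonneg (Real.exp_pos _).le]
        exact Real.exp_le_exp.2 (le_of_abs_le (habs σ))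
  have h1 : Real.exp (-B) ≤ ∫ σ, Real.exp (w σ) ∂ν := by
    have := integral_mono (μ := ν) (integrable_const (Real.exp (-B))) hint
      (fun σ => Real.exp_le_exp.2 (by linarith [(abs_le.1 (habs σ)).1]))
    simpa using this
  linarith [Real.exp_pos (-B)]

lemma gcb_log_bound {ν : Measure (Config (Site d))} [IsProbabilityMeasure ν] {C : ℝ}
    (hgcb : GCB ν C) {f : Config (Site d) → ℝ} {B : ℝ} (hfl : IsLocal f)
    (hm : Measurable f) (habs : ∀ σ, |f σ| ≤ B) :
    Real.log (∫ σ, Real.exp (f σ) ∂ν) ≤ (∫ σ, f σ ∂ν) + C / 2 * oscNormSq f := by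
  have h := hgcb f hfl
  have hpos : 0 < ∫ σ, Real.exp (f σ) ∂ν := exp_integral_pos ν hm habs
  have h2 : ∫ σ, Real.exp (f σ - ∫ τ, f τ ∂ν) ∂ν
      = (∫ σ, Real.exp (f σ) ∂ν) / Real.exp (∫ τ, f τ ∂ν) := by
    simp_rw [Real.exp_sub]
    exact integral_div _ _
  rw [h2, Real.log_div (ne_of_gt hpos) (Real.exp_ne_zero _), Real.log_exp] at h
  linarith

lemma integral_shift_eq (ρ : Measure (Config (Site d))) (hTI : TransInv ρ)
    {g : Config (Site d) → ℝ} (hg : Measurable g) (x : Site d) :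
    ∫ σ, g (shift x σ) ∂ρ = ∫ σ, g σ ∂ρ := by
  have h := integral_map (μ := ρ) (φ := shift x) (measurable_shift x).aemeasurable
    hg.aestronglyMeasurable
  rw [hTI x] at h
  exact h.symm

/-- Core contradiction: a GCB for `μ'Pⁿ` plus a local function separating
`μPⁿ` from `μ'Pⁿ` forces linear growth of the relative entropy. -/
lemma core_contradiction (P : PCA d) (μ μ' : Measure (Config (Site d)))
    [IsProbabilityMeasure μ] [IsProbabilityMeasure μ']
    (hTI : TransInv μ) (hTI' : TransInv μ')
    (hent : Filter.Tendsto
      (fun n : ℕ => relEntVol μ μ' (cube d n) / ((cube d n).card : ℝ≥0∞))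
      Filter.atTop (nhds 0))
    (n : ℕ) {C : ℝ} (hC : 0 ≤ C) (hgcb : GCB ((Pmeas P)^[n] μ') C)
    {g : Config (Site d) → ℝ} {Λ₀ : Finset (Site d)} (hgloc : LocalOn Λ₀ g)
    (hg0 : ∀ σ, 0 ≤ g σ) (hg1 : ∀ σ, g σ ≤ 1)
    (hΔ : 0 < ∫ σ, g σ ∂((Pmeas P)^[n] μ) - ∫ σ, g σ ∂((Pmeas P)^[n] μ')) :
    False := by
  classical
  haveI hμn : IsProbabilityMeasure ((Pmeas P)^[n] μ) := iterPmeas_prob P μ n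
  haveI hνn : IsProbabilityMeasure ((Pmeas P)^[n] μ') := iterPmeas_prob P μ' n
  have hTIn : TransInv ((Pmeas P)^[n] μ) := TransInv_iter P hTI n
  have hTIn' : TransInv ((Pmeas P)^[n] μ') := TransInv_iter P hTI' n
  have hgm : Measurable g := hgloc.measurable
  set Δ : ℝ := ∫ σ, g σ ∂((Pmeas P)^[n] μ) - ∫ σ, g σ ∂((Pmeas P)^[n] μ') with hΔdef
  set κ : ℝ := ∑ w ∈ Λ₀, osc g w with hκdef
  have hκ0 : 0 ≤ κ := Finset.sum_nonneg fun w _ => osc_nonneg hg0 hg1 w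
  have hq0 : 0 ≤ C * κ ^ 2 := mul_nonneg hC (sq_nonneg κ)
  set lam : ℝ := Δ / (2 * (C * κ ^ 2 + 1)) with hlamdef
  have hlam : 0 < lam := div_pos hΔ (by linarith)
  have hlamC : lam * (C * κ ^ 2) ≤ Δ / 2 := by
    rw [hlamdef, div_mul_eq_mul_div, div_le_div_iff₀ (by linarith) (by norm_num)]
    nlinarith
  set θ : ℝ := Δ / 8 with hθdef
  have hθ : 0 < θ := by rw [hθdef]; linarith
  obtain ⟨M₀, G, hGloc, hG0, hG1, hGerr⟩ := PopIter_quasilocal P hgloc hg0 hg1 n θ hθ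
  have hGm : Measurable G := hGloc.measurable
  -- the main finite-volume estimate, for every m
  have hmain : ∀ m : ℕ,
      ENNReal.ofReal (((cube d m).card : ℝ) * (lam * Δ / 2)) ≤
        relEntVol μ μ' (cube d (m + M₀)) := by
    intro m
    set V : ℝ := ((cube d m).card : ℝ) with hVdef
    have hV0 : 0 ≤ V := Nat.cast_nonneg _
    have hlamV : 0 ≤ lam * V := mul_nonneg hlam.le hV0
    -- test functions
    set fm : Config (Site d) → ℝ :=
      fun σ => lam * ∑ x ∈ cube d m, g (shift x σ) with hfmdef
    set Fh : Config (Site d) → ℝ :=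
      fun σ => lam * ∑ x ∈ cube d m, G (shift x σ) with hFhdef
    set FF : Config (Site d) → ℝ := (Pop P)^[n] fm with hFFdef
    have hfm_meas : Measurable fm :=
      (Finset.measurable_sum (cube d m)
        (fun x _ => hgm.comp (measurable_shift x))).const_mul lam
    have hfm0 : ∀ σ, 0 ≤ fm σ := fun σ =>
      mul_nonneg hlam.le (Finset.sum_nonneg fun x _ => hg0 _)
    have hfmB : ∀ σ, fm σ ≤ lam * V := by
      intro σ
      apply mul_le_mul_of_nonneg_left _ hlam.le
      calc ∑ x ∈ cube d m, g (shift x σ) ≤ ∑ _x ∈ cube d m, (1:ℝ) :=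
            Finset.sum_le_sum (fun x _ => hg1 _)
        _ = V := by rw [Finset.sum_const, nsmul_eq_mul, mul_one]
    have hfm_local : IsLocal fm := by
      refine ⟨(cube d m).biUnion (fun x => Λ₀.image (· + x)), ?_⟩
      intro σ τ hagree
      rw [hfmdef]
      simp only []
      congr 1
      apply Finset.sum_congr rfl
      intro x hx
      apply hgloc
      intro y hy
      exact hagree (y + x) (Finset.mem_biUnion.2 ⟨x, hx, Finset.mem_image.2 ⟨y, hy, rfl⟩⟩)
    -- Fh is local on the big cube
    have hFh_local : LocalOn (cube d (m + M₀)) Fh := by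
      intro σ τ hagree
      rw [hFhdef]
      simp only []
      congr 1
      apply Finset.sum_congr rfl
      intro x hx
      apply hGloc
      intro y hy
      exact hagree (y + x) (add_mem_cube hx hy)
    have hFh0 : ∀ σ, 0 ≤ Fh σ := fun σ =>
      mul_nonneg hlam.le (Finset.sum_nonneg fun x _ => hG0 _)
    have hFhB : ∀ σ, Fh σ ≤ lam * V := by
      intro σ
      apply mul_le_mul_of_nonneg_left _ hlam.le
      calc ∑ x ∈ cube d m, G (shift x σ) ≤ ∑ _x ∈ cube d m, (1:ℝ) :=
            Finset.sum_le_sum (fun x _ => hG1 _)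
        _ = V := by rw [Finset.sum_const, nsmul_eq_mul, mul_one]
    have hFF_props := PopIter_props P hfm_meas hfm0 hfmB n
    -- pointwise approximation |FF - Fh| ≤ lam * V * θ
    have hFrep : ∀ σ, FF σ = lam * ∑ x ∈ cube d m, (Pop P)^[n] g (shift x σ) := by
      intro σ
      rw [hFFdef]
      have h1 := PopIter_sum_smul P (cube d m) lam hlam.le
        (fun x σ' => g (shift x σ')) (B := 1) zero_le_one
        (fun x => hgm.comp (measurable_shift x)) (fun x σ' => hg0 _)
        (fun x σ' => hg1 _) n σ
      rw [hfmdef]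
      rw [h1]
      congr 1
      apply Finset.sum_congr rfl
      intro x _
      exact (PopIter_shift P hgm hg0 hg1 x n σ).symm
    have hFdiff : ∀ σ, |FF σ - Fh σ| ≤ lam * V * θ := by
      intro σ
      rw [hFrep σ, hFhdef]
      simp only []
      rw [← mul_sub, ← Finset.sum_sub_distrib, abs_mul, abs_of_nonneg hlam.le]
      calc lam * |∑ x ∈ cube d m, ((Pop P)^[n] g (shift x σ) - G (shift x σ))|
          ≤ lam * ∑ x ∈ cube d m, |(Pop P)^[n] g (shift x σ) - G (shift x σ)| :=
            mul_le_mul_of_nonneg_left (Finset.abs_sum_le_sum_abs _ _) hlam.le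
        _ ≤ lam * ∑ _x ∈ cube d m, θ :=
            mul_le_mul_of_nonneg_left
              (Finset.sum_le_sum (fun x _ => hGerr (shift x σ))) hlam.le
        _ = lam * V * θ := by rw [Finset.sum_const, nsmul_eq_mul]; ring
    -- integrals of fm w.r.t. the evolved measures
    have hint_fm : ∀ (ρ : Measure (Config (Site d))), IsProbabilityMeasure ρ →
        TransInv ρ → ∫ σ, fm σ ∂ρ = lam * V * ∫ σ, g σ ∂ρ := by
      intro ρ hρ hTIρ
      haveI := hρ
      rw [hfmdef]
      simp only []
      rw [integral_const_mul]
      rw [integral_finset_sum _ (fun x _ => integrable_of_bounded_meas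
        (f := fun σ => g (shift x σ)) (hgm.comp (measurable_shift x)) (B := 1)
        (fun σ => abs_le.2 ⟨by linarith [hg0 (shift x σ)], hg1 _⟩))]
      rw [Finset.sum_congr rfl fun x _ => integral_shift_eq ρ hTIρ hgm x]
      rw [Finset.sum_const, nsmul_eq_mul]
      ring
    -- lower bound for ∫ Fh dμ
    have hFFint : ∫ σ, FF σ ∂μ = ∫ σ, fm σ ∂((Pmeas P)^[n] μ) :=
      (integral_iterPmeas P μ n hfm_meas hfm0 hfmB).symm
    have hFh_meas : Measurable Fh := hFh_local.measurable
    have hintFh : Integrable Fh μ := integrable_of_bounded_meas hFh_meas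
      (B := lam * V) (fun σ => abs_le.2 ⟨by linarith [hFh0 σ, hlamV], hFhB σ⟩)
    have hintFF : Integrable FF μ := integrable_of_bounded_meas hFF_props.1
      (B := lam * V) (fun σ => abs_le.2 ⟨by linarith [hFF_props.2.1 σ, hlamV], hFF_props.2.2 σ⟩)
    have hA1 : ∫ σ, fm σ ∂((Pmeas P)^[n] μ) - lam * V * θ ≤ ∫ σ, Fh σ ∂μ := by
      rw [← hFFint]
      have hpt : ∀ σ, FF σ - lam * V * θ ≤ Fh σ := by
        intro σ
        have := abs_le.1 (hFdiff σ)
        linarith [this.1]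
      have h2 := integral_mono (f := fun σ => FF σ - lam * V * θ) (g := Fh)
        (hintFF.sub (integrable_const (lam * V * θ))) hintFh hpt
      rw [integral_sub hintFF (integrable_const _)] at h2
      simpa using h2
    -- upper bound for log ∫ exp Fh dμ'
    have hexpFh_pos : 0 < ∫ σ, Real.exp (Fh σ) ∂μ' := exp_integral_pos μ' hFh_meas
      (B := lam * V) (fun σ => abs_le.2 ⟨by linarith [hFh0 σ, hlamV], hFhB σ⟩)
    have hexpFF_pos : 0 < ∫ σ, Real.exp (FF σ) ∂μ' := exp_integral_pos μ' hFF_props.1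
      (B := lam * V) (fun σ => abs_le.2 ⟨by linarith [hFF_props.2.1 σ, hlamV], hFF_props.2.2 σ⟩)
    have hexpfm_pos : 0 < ∫ σ, Real.exp (fm σ) ∂((Pmeas P)^[n] μ') :=
      exp_integral_pos _ hfm_meas
        (B := lam * V) (fun σ => abs_le.2 ⟨by linarith [hfm0 σ, hlamV], hfmB σ⟩)
    have hA4 : Real.log (∫ σ, Real.exp (Fh σ) ∂μ') ≤
        lam * V * θ + Real.log (∫ σ, Real.exp (FF σ) ∂μ') := by
      have hpt : ∀ σ, Real.exp (Fh σ) ≤ Real.exp (FF σ) * Real.exp (lam * V * θ) := by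
        intro σ
        rw [← Real.exp_add]
        apply Real.exp_le_exp.2
        have := abs_le.1 (hFdiff σ)
        linarith [this.2]
      have hint1 : Integrable (fun σ => Real.exp (Fh σ)) μ' :=
        integrable_of_bounded_meas (f := fun σ => Real.exp (Fh σ))
          (Real.measurable_exp.comp hFh_meas)
          (B := Real.exp (lam * V)) fun σ => by
            rw [abs_of_nonneg (Real.exp_pos _).le]
            exact Real.exp_le_exp.2 (hFhB σ)
      have hint2 : Integrable (fun σ => Real.exp (FF σ) * Real.exp (lam * V * θ)) μ' :=
        (integrable_of_bounded_meas (f := fun σ => Real.exp (FF σ))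
          (Real.measurable_exp.comp hFF_props.1)
          (B := Real.exp (lam * V)) fun σ => by
            rw [abs_of_nonneg (Real.exp_pos _).le]
            exact Real.exp_le_exp.2 (hFF_props.2.2 σ)).mul_const _
      have hle := integral_mono hint1 hint2 hpt
      rw [integral_mul_const] at hle
      calc Real.log (∫ σ, Real.exp (Fh σ) ∂μ')
          ≤ Real.log ((∫ σ, Real.exp (FF σ) ∂μ') * Real.exp (lam * V * θ)) :=
            Real.log_le_log hexpFh_pos hle
        _ = lam * V * θ + Real.log (∫ σ, Real.exp (FF σ) ∂μ') := by
            rw [Real.log_mul (ne_of_gt hexpFF_pos) (Real.exp_ne_zero _), Real.log_exp]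
            ring
    have hA5 : Real.log (∫ σ, Real.exp (FF σ) ∂μ') ≤
        Real.log (∫ σ, Real.exp (fm σ) ∂((Pmeas P)^[n] μ')) := by
      apply Real.log_le_log hexpFF_pos
      rw [hFFdef]
      exact exp_chain P μ' n hfm_meas hfm0 hfmB
    have hA6 : Real.log (∫ σ, Real.exp (fm σ) ∂((Pmeas P)^[n] μ')) ≤
        (∫ σ, fm σ ∂((Pmeas P)^[n] μ')) + C / 2 * oscNormSq fm := by
      exact gcb_log_bound hgcb hfm_local hfm_meas
        (B := lam * V) (fun σ => abs_le.2 ⟨by linarith [hfm0 σ, hlamV], hfmB σ⟩)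
    have hA7 : oscNormSq fm ≤ lam ^ 2 * V * κ ^ 2 := by
      have := oscNormSq_sum_shift hgloc hg0 hg1 lam hlam.le m
      rw [hfmdef]
      calc oscNormSq (fun σ => lam * ∑ x ∈ cube d m, g (shift x σ))
          ≤ lam ^ 2 * ((cube d m).card : ℝ) * (∑ w ∈ Λ₀, osc g w) ^ 2 := this
        _ = lam ^ 2 * V * κ ^ 2 := by rw [hκdef, hVdef]
    -- combine
    have hpayoff : V * (lam * Δ / 2) ≤
        (∫ σ, Fh σ ∂μ) - Real.log (∫ σ, Real.exp (Fh σ) ∂μ') := by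
      have e1 : C / 2 * oscNormSq fm ≤ C / 2 * (lam ^ 2 * V * κ ^ 2) :=
        mul_le_mul_of_nonneg_left hA7 (by linarith)
      have e2 : C / 2 * (lam ^ 2 * V * κ ^ 2) = V * lam / 2 * (lam * (C * κ ^ 2)) := by
        ring
      have e3 : V * lam / 2 * (lam * (C * κ ^ 2)) ≤ V * lam / 2 * (Δ / 2) :=
        mul_le_mul_of_nonneg_left hlamC
          (div_nonneg (mul_nonneg hV0 hlam.le) (by norm_num))
      have hμint := hint_fm ((Pmeas P)^[n] μ) hμn hTIn
      have hνint := hint_fm ((Pmeas P)^[n] μ') hνn hTIn'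
      have hΔint : (∫ σ, fm σ ∂((Pmeas P)^[n] μ)) -
          (∫ σ, fm σ ∂((Pmeas P)^[n] μ')) = lam * V * Δ := by
        rw [hμint, hνint, hΔdef]
        ring
      have hosc : C / 2 * oscNormSq fm ≤ V * lam * Δ / 4 := by
        have e4 : V * lam / 2 * (Δ / 2) = V * lam * Δ / 4 := by ring
        linarith [e1, e3, e2.le, e2.ge]
      have hθ2 : lam * V * θ = lam * V * Δ / 8 := by rw [hθdef]; ring
      linarith [hA1, hA4, hA5, hA6, hΔint, hosc, hθ2]
    -- variational bound
    have hvar := relEntVol_ge_variational μ μ' (cube d (m + M₀)) hFh_local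
    calc ENNReal.ofReal (V * (lam * Δ / 2))
        ≤ ENNReal.ofReal ((∫ σ, Fh σ ∂μ) - Real.log (∫ σ, Real.exp (Fh σ) ∂μ')) :=
          ENNReal.ofReal_le_ofReal hpayoff
      _ ≤ relEntVol μ μ' (cube d (m + M₀)) := hvar
  -- endgame: contradiction with vanishing entropy density
  set c : ℝ := lam * Δ / 2 with hcdef
  have hc : 0 < c := by
    rw [hcdef]
    exact div_pos (mul_pos hlam hΔ) (by norm_num)
  have hend : ∀ m : ℕ, M₀ ≤ m →
      ENNReal.ofReal (c / 2 ^ d) ≤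
        relEntVol μ μ' (cube d (m + M₀)) / ((cube d (m + M₀)).card : ℝ≥0∞) := by
    intro m hm
    have hcard : ((cube d (m + M₀)).card : ℝ≥0∞) ≠ 0 := by
      simp only [ne_eq, Nat.cast_eq_zero]
      rw [card_cube]
      positivity
    have hcardtop : ((cube d (m + M₀)).card : ℝ≥0∞) ≠ ⊤ := ENNReal.natCast_ne_top _
    rw [ENNReal.le_div_iff_mul_le (Or.inl hcard) (Or.inl hcardtop)]
    have hnat : (2 * (m + M₀) + 1) ^ d ≤ 2 ^ d * (2 * m + 1) ^ d := by
      rw [← Nat.mul_pow]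
      apply Nat.pow_le_pow_left
      omega
    calc ENNReal.ofReal (c / 2 ^ d) * ((cube d (m + M₀)).card : ℝ≥0∞)
        = ENNReal.ofReal (c / 2 ^ d * ((cube d (m + M₀)).card : ℝ)) := by
          rw [ENNReal.ofReal_mul (div_pos hc (by positivity)).le, ENNReal.ofReal_natCast]
      _ ≤ ENNReal.ofReal (((cube d m).card : ℝ) * c) := by
          apply ENNReal.ofReal_le_ofReal
          rw [div_mul_eq_mul_div, div_le_iff₀ (by positivity : (0:ℝ) < 2 ^ d)]
          have h2 : ((cube d (m + M₀)).card : ℝ) ≤ 2 ^ d * ((cube d m).card : ℝ) := by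
            rw [card_cube, card_cube]
            exact_mod_cast hnat
          calc c * ((cube d (m + M₀)).card : ℝ)
              ≤ c * (2 ^ d * ((cube d m).card : ℝ)) :=
                mul_le_mul_of_nonneg_left h2 hc.le
            _ = ((cube d m).card : ℝ) * c * 2 ^ d := by ring
      _ ≤ relEntVol μ μ' (cube d (m + M₀)) := hmain m
  -- the shifted sequence still tends to zero
  have hcomp : Filter.Tendsto
      (fun m : ℕ => relEntVol μ μ' (cube d (m + M₀)) / ((cube d (m + M₀)).card : ℝ≥0∞))
      Filter.atTop (nhds 0) := hent.comp (Filter.tendsto_add_atTop_nat M₀)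
  have hpos : (0:ℝ≥0∞) < ENNReal.ofReal (c / 2 ^ d) :=
    ENNReal.ofReal_pos.2 (div_pos hc (by positivity))
  have hev : ∀ᶠ m in Filter.atTop,
      (relEntVol μ μ' (cube d (m + M₀)) / ((cube d (m + M₀)).card : ℝ≥0∞)) <
        ENNReal.ofReal (c / 2 ^ d) :=
    hcomp.eventually (eventually_lt_nhds hpos)
  obtain ⟨m, hm1, hm2⟩ := (hev.and (Filter.eventually_ge_atTop M₀)).exists
  exact absurd (hend m hm2) (not_le.2 hm1)

end Layer7
/-- if `P` is non-degenerate and `μ ≠ μ'` are translation-invariant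
probability measures with zero relative entropy density `s(μ|μ') = 0`, then for
every `n`, `μ'Pⁿ` does not satisfy `GCB(C)` for any `C ≥ 0`. -/
theorem no_gcb_from_zero_entropy {d : ℕ} (P : PCA d)
    (hnd : ∀ μ ν : Measure (Config (Site d)),
      IsProbabilityMeasure μ → IsProbabilityMeasure ν → μ ≠ ν →
      ∀ n : ℕ, (Pmeas P)^[n] μ ≠ (Pmeas P)^[n] ν)
    (μ μ' : Measure (Config (Site d))) [IsProbabilityMeasure μ]
    [IsProbabilityMeasure μ'] (hTI : TransInv μ) (hTI' : TransInv μ')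
    (hne : μ ≠ μ')
    (hent : Tendsto
      (fun n : ℕ => relEntVol μ μ' (cube d n) / ((cube d n).card : ℝ≥0∞))
      atTop (nhds 0)) :
    ∀ (n : ℕ) (C : ℝ), 0 ≤ C → ¬ GCB ((Pmeas P)^[n] μ') C := by
  intro n C hC hgcb
  classical
  haveI hμn : IsProbabilityMeasure ((Pmeas P)^[n] μ) := iterPmeas_prob P μ n
  haveI hνn : IsProbabilityMeasure ((Pmeas P)^[n] μ') := iterPmeas_prob P μ' n
  have hne_n : (Pmeas P)^[n] μ ≠ (Pmeas P)^[n] μ' :=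
    hnd μ μ' ‹_› ‹_› hne n
  -- find a separating cylinder
  obtain ⟨Λ₀, b₀, hdiff⟩ : ∃ (Λ₀ : Finset (Site d)) (b₀ : Λ₀ → Bool),
      ((Pmeas P)^[n] μ) (cyl Λ₀ (extb Λ₀ b₀)) ≠
        ((Pmeas P)^[n] μ') (cyl Λ₀ (extb Λ₀ b₀)) := by
    by_contra hc
    push_neg at hc
    exact hne_n (measure_ext_cyl fun Λ b => hc Λ b)
  set S : Set (Config (Site d)) := cyl Λ₀ (extb Λ₀ b₀) with hSdef
  set g₀ : Config (Site d) → ℝ := S.indicator (fun _ => (1:ℝ)) with hg₀def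
  have hg₀loc : LocalOn Λ₀ g₀ := by
    intro σ τ h
    rw [hg₀def]
    by_cases hm : σ ∈ S
    · have hτ : τ ∈ S := by
        intro x hx
        rw [← h x hx]
        exact hm x hx
      rw [Set.indicator_of_mem hm, Set.indicator_of_mem hτ]
    · have hτ : τ ∉ S := by
        intro hτm
        apply hm
        intro x hx
        rw [h x hx]
        exact hτm x hx
      rw [Set.indicator_of_notMem hm, Set.indicator_of_notMem hτ]
  have hg₀0 : ∀ σ, 0 ≤ g₀ σ := by
    intro σ
    rw [hg₀def]
    by_cases hm : σ ∈ S <;> simp [hm]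
  have hg₀1 : ∀ σ, g₀ σ ≤ 1 := by
    intro σ
    rw [hg₀def]
    by_cases hm : σ ∈ S <;> simp [hm]
  have hint : ∀ (ρ : Measure (Config (Site d))), IsProbabilityMeasure ρ →
      ∫ σ, g₀ σ ∂ρ = (ρ S).toReal := by
    intro ρ hρ
    haveI := hρ
    rw [hg₀def, hSdef]
    rw [integral_indicator_const _ (measurableSet_cyl _ _)]
    simp [Measure.real]
  have hμint := hint _ hμn
  have hνint := hint _ hνn
  have hΔ0ne : (((Pmeas P)^[n] μ) S).toReal ≠ (((Pmeas P)^[n] μ') S).toReal := by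
    intro h
    exact hdiff ((ENNReal.toReal_eq_toReal_iff' (measure_ne_top _ _) (measure_ne_top _ _)).1 h)
  rcases lt_or_gt_of_ne hΔ0ne with hlt | hgt
  · -- use g := 1 - g₀
    have hgloc : LocalOn Λ₀ (fun σ => 1 - g₀ σ) := hg₀loc.comp (fun t => 1 - t)
    have hintc : ∀ (ρ : Measure (Config (Site d))), IsProbabilityMeasure ρ →
        ∫ σ, (1 - g₀ σ) ∂ρ = 1 - (ρ S).toReal := by
      intro ρ hρ
      haveI := hρ
      rw [integral_sub (integrable_const 1)
        (integrable_of_bounded_meas hg₀loc.measurable (B := 1)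
          (fun σ => abs_le.2 ⟨by linarith [hg₀0 σ], hg₀1 σ⟩))]
      rw [hint _ hρ]
      simp
    apply core_contradiction P μ μ' hTI hTI' hent n hC hgcb hgloc
      (fun σ => by linarith [hg₀1 σ]) (fun σ => by linarith [hg₀0 σ])
    rw [hintc _ hμn, hintc _ hνn]
    linarith
  · apply core_contradiction P μ μ' hTI hTI' hent n hC hgcb hg₀loc hg₀0 hg₀1
    rw [hμint, hνint]
    linarith
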